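/- arXiv:math/0703690 — 3 statements merged into one kernel-verified Lean document; each statement's English description precedes it below -/
import Mathlib

section
/- Let n, N ≥ 1 be integers. For every ℝ-basis (Y_1, …, Y_{N(N−1)/2}) of the real Lie algebra so(N) of antisymmetric real N×N matrices that is orthonormal with respect to the scalar product ⟨X,Y⟩ = −Tr(XY), the following identity of ℂ-linear endomorphisms of (ℂ^N)^{⊗n} holds: (∑_{τ ∈ T_n} P_τ) + ∑_a D(Y_a) ∘ D(Y_a) = −((N−1)n/2) · Id + ∑_{1 ≤ k < l ≤ n} C_{kl}. -/
noncomputable section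

open scoped TensorProduct

/-- The tensor power `(ℂ^N)^{⊗n}`. -/
abbrev TP (n N : ℕ) := ⨂[ℂ] (_ : Fin n), (Fin N → ℂ)

/-- `P_σ`: the permutation of tensor factors,
`P_σ(x_1 ⊗ ⋯ ⊗ x_n) = x_{σ⁻¹(1)} ⊗ ⋯ ⊗ x_{σ⁻¹(n)}`. -/
def permMap (n N : ℕ) (σ : Equiv.Perm (Fin n)) : TP n N →ₗ[ℂ] TP n N :=
  (PiTensorProduct.reindex ℂ (fun _ : Fin n => Fin N → ℂ) σ).toLinearMap

/-- The matrix `X` acting on the `k`-th tensor factor: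
`Id^{⊗(k−1)} ⊗ X ⊗ Id^{⊗(n−k)}`. -/
def factorMap (n N : ℕ) (k : Fin n) (X : Matrix (Fin N) (Fin N) ℂ) :
    TP n N →ₗ[ℂ] TP n N :=
  PiTensorProduct.map (fun i => if i = k then Matrix.toLin' X else LinearMap.id)

/-- `D(X) = ∑_{k=1}^n Id^{⊗(k−1)} ⊗ X ⊗ Id^{⊗(n−k)}`. -/
def Dmap (n N : ℕ) (X : Matrix (Fin N) (Fin N) ℂ) : TP n N →ₗ[ℂ] TP n N :=
  ∑ k : Fin n, factorMap n N k X

/-- The matrices `X` and `Y` acting on the `k`-th and `l`-th tensor factors respectively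
(identity elsewhere); used below for `k ≠ l`. -/
def factor2Map (n N : ℕ) (k l : Fin n) (X Y : Matrix (Fin N) (Fin N) ℂ) :
    TP n N →ₗ[ℂ] TP n N :=
  PiTensorProduct.map
    (fun i => if i = k then Matrix.toLin' X else if i = l then Matrix.toLin' Y else LinearMap.id)

/-- The contraction-expansion operator `C_{kl} = ∑_{m,a} (E_{ma})_k ⊗ (E_{ma})_l`
(`E_{ma}` the matrix units): on basis vectors it sends `e_{i_1} ⊗ ⋯ ⊗ e_{i_n}` to
`δ_{i_k i_l} ∑_{m=1}^N (the basis vector with the factors at positions k and l both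
replaced by e_m)`. -/
def Cmap (n N : ℕ) (k l : Fin n) : TP n N →ₗ[ℂ] TP n N :=
  ∑ m : Fin N, ∑ a : Fin N,
    factor2Map n N k l (Matrix.single m a 1) (Matrix.single m a 1)

namespace CasimirAux

open PiTensorProduct Function Finset
open scoped Matrix

/-! ### Scalar (matrix entry) lemmas -/

lemma stdBasis_entry {N : ℕ} (i j p q : Fin N) :
    Matrix.single i j (1:ℝ) p q - Matrix.single j i (1:ℝ) p q
      = (if i = p then (1:ℝ) else 0) * (if j = q then (1:ℝ) else 0)
        - (if i = q then (1:ℝ) else 0) * (if j = p then (1:ℝ) else 0) := by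
  simp only [Matrix.single, Matrix.of_apply]
  by_cases h1 : i = p <;> by_cases h2 : j = q <;> by_cases h3 : i = q <;>
    by_cases h4 : j = p <;> simp_all

lemma trace_stdBasisMatrix_mul {N : ℕ} (i j : Fin N) (M : Matrix (Fin N) (Fin N) ℝ) :
    Matrix.trace (Matrix.single i j (1 : ℝ) * M) = M j i := by
  classical
  rw [Matrix.trace]
  rw [Finset.sum_eq_single i]
  · simp [Matrix.diag]
  · intro b _ hb
    simp [Matrix.diag, Matrix.single_mul_apply_of_ne (h := hb)]
  · simp

section Struct

variable {N d : ℕ} (Y : Fin d → Matrix (Fin N) (Fin N) ℝ)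
  (hskew : ∀ a, (Y a).transpose = -(Y a))
  (hortho : ∀ a b, -Matrix.trace (Y a * Y b) = if a = b then (1 : ℝ) else 0)
  (hspan : ∀ Z : Matrix (Fin N) (Fin N) ℝ, Z.transpose = -Z →
      ∃ c : Fin d → ℝ, Z = ∑ a, c a • Y a)

include hskew hortho hspan in
lemma structR (i j p q : Fin N) :
    (2 : ℝ) * ∑ a, Y a i j * Y a p q =
      (if i = p then (1:ℝ) else 0) * (if j = q then (1:ℝ) else 0)
        - (if i = q then (1:ℝ) else 0) * (if j = p then (1:ℝ) else 0) := by
  classical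
  set Z : Matrix (Fin N) (Fin N) ℝ :=
    Matrix.single i j 1 - Matrix.single j i 1 with hZdef
  have hZ : Z.transpose = -Z := by
    ext p' q'
    simp only [hZdef, Matrix.transpose_apply, Matrix.sub_apply, Matrix.neg_apply,
      Matrix.single, Matrix.of_apply]
    by_cases h1 : i = p' <;> by_cases h2 : j = q' <;> by_cases h3 : i = q' <;>
      by_cases h4 : j = p' <;> simp_all <;> ring
  obtain ⟨c, hc⟩ := hspan Z hZ
  have key : ∀ b, c b = 2 * Y b i j := by
    intro b
    have htr : Matrix.trace (Z * Y b) = ∑ a, c a * Matrix.trace (Y a * Y b) := by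
      rw [hc, Matrix.sum_mul]
      simp [Matrix.smul_mul, Matrix.trace_smul]
    have h1 : -Matrix.trace (Z * Y b) = c b := by
      have hterm : ∀ a, c a * Matrix.trace (Y a * Y b)
          = -(if a = b then c a else 0) := by
        intro a
        have h2 : Matrix.trace (Y a * Y b) = -(if a = b then (1:ℝ) else 0) := by
          have := hortho a b; linarith
        rw [h2]
        by_cases hab : a = b <;> simp [hab]
      rw [htr, Finset.sum_congr rfl fun a _ => hterm a]
      simp
    have hji : Y b j i = -Y b i j := by
      have := congrFun (congrFun (hskew b) i) j
      simpa [Matrix.transpose_apply, Matrix.neg_apply] using this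
    have h2 : -Matrix.trace (Z * Y b) = 2 * Y b i j := by
      rw [hZdef, Matrix.sub_mul, Matrix.trace_sub, trace_stdBasisMatrix_mul,
        trace_stdBasisMatrix_mul, hji]
      ring
    rw [← h1, h2]
  have h4 : Z p q = ∑ a, c a * Y a p q := by
    rw [hc]; simp [Matrix.sum_apply]
  have h5 : Z p q = ∑ a, 2 * Y a i j * Y a p q := by
    rw [h4]; exact Finset.sum_congr rfl fun a _ => by rw [key a]
  calc (2:ℝ) * ∑ a, Y a i j * Y a p q
      = ∑ a, 2 * Y a i j * Y a p q := by
        rw [Finset.mul_sum]; simp [mul_assoc]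
    _ = Z p q := h5.symm
    _ = _ := by
        rw [hZdef, Matrix.sub_apply]
        exact stdBasis_entry i j p q

include hskew hortho hspan in
lemma structC (i j p q : Fin N) :
    (2 : ℂ) * ∑ a, ((Y a i j : ℝ) : ℂ) * ((Y a p q : ℝ) : ℂ) =
      (if i = p then (1:ℂ) else 0) * (if j = q then (1:ℂ) else 0)
        - (if i = q then (1:ℂ) else 0) * (if j = p then (1:ℂ) else 0) := by
  calc (2:ℂ) * ∑ a, ((Y a i j : ℝ):ℂ) * ((Y a p q : ℝ):ℂ)
      = ((2 * ∑ a, Y a i j * Y a p q : ℝ) : ℂ) := by push_cast; ring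
    _ = _ := by
        rw [structR Y hskew hortho hspan i j p q]
        push_cast [apply_ite Complex.ofReal]
        ring

include hskew hortho hspan in
lemma sumYsq :
    ∑ a, ((Y a).map Complex.ofReal * (Y a).map Complex.ofReal)
      = (-(((N:ℂ) - 1) / 2)) • (1 : Matrix (Fin N) (Fin N) ℂ) := by
  ext i q
  rw [Matrix.sum_apply]
  have hterm : ∀ a, ((Y a).map Complex.ofReal * (Y a).map Complex.ofReal) i q
      = ∑ j, ((Y a i j : ℝ):ℂ) * ((Y a j q : ℝ):ℂ) := by
    intro a; rw [Matrix.mul_apply]; simp [Matrix.map_apply]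
  rw [Finset.sum_congr rfl fun a _ => hterm a, Finset.sum_comm]
  have hj : ∀ j, ∑ a, ((Y a i j:ℝ):ℂ) * ((Y a j q:ℝ):ℂ)
      = (1/2) * ((if i = j then (1:ℂ) else 0) * (if j = q then (1:ℂ) else 0)
          - (if i = q then (1:ℂ) else 0)) := by
    intro j
    have h := structC Y hskew hortho hspan i j j q
    simp only [eq_self_iff_true, if_true, mul_one] at h
    linear_combination h / 2
  rw [Finset.sum_congr rfl fun j _ => hj j]
  by_cases hiq : i = q
  · subst hiq
    rw [Finset.sum_congr rfl (fun j _ => show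
        (1/2 : ℂ) * ((if i = j then (1:ℂ) else 0) * (if j = i then (1:ℂ) else 0)
          - (if i = i then (1:ℂ) else 0))
        = (-1/2) + (if i = j then (1/2 : ℂ) else 0) from by
      by_cases hij : i = j
      · subst hij; norm_num
      · simp [hij, Ne.symm hij]; norm_num)]
    rw [Finset.sum_add_distrib, Finset.sum_const, Finset.sum_ite_eq]
    simp [Matrix.one_apply]
    ring
  · rw [Finset.sum_congr rfl (fun j _ => show
        (1/2 : ℂ) * ((if i = j then (1:ℂ) else 0) * (if j = q then (1:ℂ) else 0)
          - (if i = q then (1:ℂ) else 0)) = 0 from by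
      by_cases hij : i = j
      · subst hij; simp [hiq]
      · simp [hij, hiq])]
    simp [Matrix.one_apply, hiq]

end Struct

/-! ### Tensor operator lemmas -/

variable {n N : ℕ}

lemma tp_ext {f g : TP n N →ₗ[ℂ] TP n N}
    (h : ∀ x : Fin n → (Fin N → ℂ), f (tprod ℂ x) = g (tprod ℂ x)) : f = g :=
  PiTensorProduct.ext (MultilinearMap.ext fun x => by simpa using h x)

/-- standard basis vector -/
def bv (N : ℕ) (p : Fin N) : Fin N → ℂ := Pi.single p 1

lemma toLin'_std (m a : Fin N) (v : Fin N → ℂ) :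
    Matrix.toLin' (Matrix.single m a (1:ℂ)) v = v a • bv N m := by
  funext j
  rw [Matrix.toLin'_apply, Matrix.single_mulVec]
  rcases eq_or_ne j m with rfl | h
  · simp [bv]
  · simp [Function.update_apply, h, bv, Pi.single_apply, Ne.symm h]

lemma vec_expand (v : Fin N → ℂ) : v = ∑ p, v p • bv N p := by
  funext j
  rw [Finset.sum_apply]
  simp [bv, Pi.single_apply]

lemma factorMap_tprod (k : Fin n) (X : Matrix (Fin N) (Fin N) ℂ)
    (x : Fin n → (Fin N → ℂ)) :
    factorMap n N k X (tprod ℂ x)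
      = tprod ℂ (update x k (Matrix.toLin' X (x k))) := by
  rw [factorMap, PiTensorProduct.map_tprod]
  congr 1
  funext i
  rcases eq_or_ne i k with rfl | h
  · simp
  · simp [h, update_of_ne h]

lemma factor2Map_tprod {k l : Fin n} (hkl : k ≠ l) (X Z : Matrix (Fin N) (Fin N) ℂ)
    (x : Fin n → (Fin N → ℂ)) :
    factor2Map n N k l X Z (tprod ℂ x)
      = tprod ℂ (update (update x k (Matrix.toLin' X (x k))) l (Matrix.toLin' Z (x l))) := by
  rw [factor2Map, PiTensorProduct.map_tprod]
  congr 1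
  funext i
  rcases eq_or_ne i l with rfl | hl
  · simp [Ne.symm hkl]
  · rw [update_of_ne hl]
    rcases eq_or_ne i k with rfl | hk
    · simp
    · simp [hk, hl, update_of_ne hk]

lemma factor2Map_comm {k l : Fin n} (hkl : k ≠ l) (X Z : Matrix (Fin N) (Fin N) ℂ) :
    factor2Map n N l k X Z = factor2Map n N k l Z X := by
  rw [factor2Map, factor2Map]
  congr 1
  funext i
  by_cases h1 : i = k
  · subst h1; simp [hkl]
  · by_cases h2 : i = l
    · simp [h1, h2, Ne.symm hkl]
    · simp [h1, h2]

lemma factorMap_comp_same (k : Fin n) (X X' : Matrix (Fin N) (Fin N) ℂ) :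
    factorMap n N k X ∘ₗ factorMap n N k X' = factorMap n N k (X * X') := by
  rw [factorMap, factorMap, factorMap, ← PiTensorProduct.map_comp]
  congr 1
  funext i
  rcases eq_or_ne i k with rfl | h
  · simp [Matrix.toLin'_mul]
  · simp [h]

lemma factorMap_comp_ne {k l : Fin n} (h : k ≠ l) (X Z : Matrix (Fin N) (Fin N) ℂ) :
    factorMap n N k X ∘ₗ factorMap n N l Z = factor2Map n N k l X Z := by
  rw [factorMap, factorMap, factor2Map, ← PiTensorProduct.map_comp]
  congr 1
  funext i
  rcases eq_or_ne i k with rfl | hik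
  · simp [h]
  · rcases eq_or_ne i l with rfl | hil
    · simp [hik]
    · simp [hik, hil]

lemma factorMap_one (k : Fin n) : factorMap n N k 1 = LinearMap.id := by
  rw [factorMap]
  have h : (fun i : Fin n => if i = k then Matrix.toLin' (1 : Matrix (Fin N) (Fin N) ℂ)
      else LinearMap.id) = fun _ => (LinearMap.id : (Fin N → ℂ) →ₗ[ℂ] (Fin N → ℂ)) := by
    funext i
    split <;> simp [Matrix.toLin'_one]
  rw [h, PiTensorProduct.map_id]

/-- `factorMap` as a linear map in the matrix argument. -/
def factorL (n N : ℕ) (k : Fin n) :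
    Matrix (Fin N) (Fin N) ℂ →ₗ[ℂ] (TP n N →ₗ[ℂ] TP n N) where
  toFun X := factorMap n N k X
  map_add' X X' := tp_ext fun x => by
    rw [LinearMap.add_apply, factorMap_tprod, factorMap_tprod, factorMap_tprod, map_add,
      LinearMap.add_apply]
    exact MultilinearMap.map_update_add (PiTensorProduct.tprod ℂ) x k _ _
  map_smul' c X := tp_ext fun x => by
    rw [RingHom.id_apply, LinearMap.smul_apply, factorMap_tprod, factorMap_tprod, map_smul,
      LinearMap.smul_apply]
    exact MultilinearMap.map_update_smul (PiTensorProduct.tprod ℂ) x k c _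

/-- tprod with two slots updated, basis double-expansion. -/
lemma texpand {k l : Fin n} (hkl : k ≠ l) (x : Fin n → (Fin N → ℂ)) (v w : Fin N → ℂ) :
    (tprod ℂ (update (update x k v) l w) : TP n N)
      = ∑ p, ∑ q, (v p * w q) •
          (tprod ℂ (update (update x k (bv N p)) l (bv N q)) : TP n N) := by
  have step2 : ∀ q : Fin N, (tprod ℂ (update (update x k v) l (bv N q)) : TP n N)
      = ∑ p, v p • (tprod ℂ (update (update x k (bv N p)) l (bv N q)) : TP n N) := by
    intro q
    rw [update_comm hkl]
    conv_lhs => rw [vec_expand v]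
    rw [MultilinearMap.map_update_sum]
    refine Finset.sum_congr rfl fun p _ => ?_
    rw [MultilinearMap.map_update_smul (PiTensorProduct.tprod ℂ) (update x l (bv N q)) k
      (v p) (bv N p), update_comm hkl]
  calc (tprod ℂ (update (update x k v) l w) : TP n N)
      = ∑ q, w q • (tprod ℂ (update (update x k v) l (bv N q)) : TP n N) := by
        conv_lhs => rw [vec_expand w]
        rw [MultilinearMap.map_update_sum]
        exact Finset.sum_congr rfl fun q _ =>
          MultilinearMap.map_update_smul (PiTensorProduct.tprod ℂ) (update x k v) l
            (w q) (bv N q)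
    _ = ∑ q, ∑ p, (v p * w q) •
          (tprod ℂ (update (update x k (bv N p)) l (bv N q)) : TP n N) := by
        refine Finset.sum_congr rfl fun q _ => ?_
        rw [step2 q, Finset.smul_sum]
        exact Finset.sum_congr rfl fun p _ => by rw [smul_smul, mul_comm]
    _ = _ := Finset.sum_comm

/-- scalar multiples in the two slots pull out. -/
lemma tprod_update2_smul {k l : Fin n} (hkl : k ≠ l) (x : Fin n → (Fin N → ℂ))
    (c d : ℂ) (v w : Fin N → ℂ) :
    (tprod ℂ (update (update x k (c • v)) l (d • w)) : TP n N)
      = (c * d) • (tprod ℂ (update (update x k v) l w) : TP n N) := by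
  rw [MultilinearMap.map_update_smul (PiTensorProduct.tprod ℂ) (update x k (c • v)) l d w,
    update_comm hkl,
    MultilinearMap.map_update_smul (PiTensorProduct.tprod ℂ) (update x l w) k c v,
    update_comm hkl, smul_smul, mul_comm]

lemma perm_apply {k l : Fin n} (hkl : k ≠ l) (x : Fin n → (Fin N → ℂ)) :
    permMap n N (Equiv.swap k l) (tprod ℂ x)
      = ∑ p, ∑ q, ((x l) p * (x k) q) •
          (tprod ℂ (update (update x k (bv N p)) l (bv N q)) : TP n N) := by
  have h0 : permMap n N (Equiv.swap k l) (tprod ℂ x)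
      = tprod ℂ (fun i => x ((Equiv.swap k l).symm i)) := by
    simp [permMap, PiTensorProduct.reindex_tprod]
  rw [h0]
  have h1 : (fun i => x ((Equiv.swap k l).symm i)) = update (update x k (x l)) l (x k) := by
    funext i
    rw [Equiv.symm_swap]
    rcases eq_or_ne i l with rfl | hl
    · rw [Equiv.swap_apply_right, update_self]
    · rw [update_of_ne hl]
      rcases eq_or_ne i k with rfl | hk
      · rw [Equiv.swap_apply_left, update_self]
      · rw [Equiv.swap_apply_of_ne_of_ne hk hl, update_of_ne hk]
  rw [h1, texpand hkl]

lemma Cmap_apply {k l : Fin n} (hkl : k ≠ l) (x : Fin n → (Fin N → ℂ)) :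
    Cmap n N k l (tprod ℂ x)
      = ∑ p, ∑ q, (if p = q then (∑ i, x k i * x l i) else 0) •
          (tprod ℂ (update (update x k (bv N p)) l (bv N q)) : TP n N) := by
  rw [Cmap]
  simp only [LinearMap.sum_apply]
  have h1 : ∀ m a : Fin N,
      factor2Map n N k l (Matrix.single m a 1) (Matrix.single m a 1)
        (tprod ℂ x)
      = (x k a * x l a) •
          (tprod ℂ (update (update x k (bv N m)) l (bv N m)) : TP n N) := by
    intro m a
    rw [factor2Map_tprod hkl, toLin'_std, toLin'_std, tprod_update2_smul hkl]
  rw [Finset.sum_congr rfl fun m _ => Finset.sum_congr rfl fun a _ => h1 m a]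
  refine Finset.sum_congr rfl fun p _ => ?_
  rw [← Finset.sum_smul]
  symm
  rw [Finset.sum_eq_single p]
  · simp
  · intro q _ hq
    rw [if_neg fun h => hq h.symm, zero_smul]
  · intro h; exact absurd (Finset.mem_univ p) h

section Cross

variable {d : ℕ} (Y : Fin d → Matrix (Fin N) (Fin N) ℝ)
  (hskew : ∀ a, (Y a).transpose = -(Y a))
  (hortho : ∀ a b, -Matrix.trace (Y a * Y b) = if a = b then (1 : ℝ) else 0)
  (hspan : ∀ Z : Matrix (Fin N) (Fin N) ℝ, Z.transpose = -Z →
      ∃ c : Fin d → ℝ, Z = ∑ a, c a • Y a)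

include hskew hortho hspan in
lemma scalar_key (v w : Fin N → ℂ) (p q : Fin N) :
    (2:ℂ) * (∑ a, (((Y a).map Complex.ofReal) *ᵥ v) p * (((Y a).map Complex.ofReal) *ᵥ w) q)
      + (w p * v q) = (if p = q then ∑ i, v i * w i else 0) := by
  have hmv : ∀ (a : Fin d) (u : Fin N → ℂ) (r : Fin N),
      (((Y a).map Complex.ofReal) *ᵥ u) r = ∑ j, ((Y a r j : ℝ):ℂ) * u j := by
    intro a u r; simp [Matrix.mulVec, dotProduct, Matrix.map_apply]
  simp only [hmv]
  have h1 : ∀ a : Fin d, (∑ j, ((Y a p j:ℝ):ℂ) * v j) * (∑ i, ((Y a q i:ℝ):ℂ) * w i)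
      = ∑ j, ∑ i, (((Y a p j:ℝ):ℂ) * ((Y a q i:ℝ):ℂ)) * (v j * w i) := by
    intro a
    rw [Finset.sum_mul_sum]
    exact Finset.sum_congr rfl fun j _ => Finset.sum_congr rfl fun i _ => by ring
  rw [Finset.sum_congr rfl fun a _ => h1 a]
  rw [Finset.sum_comm]
  rw [Finset.sum_congr rfl fun j (_ : j ∈ Finset.univ) => Finset.sum_comm]
  rw [Finset.sum_congr rfl fun j (_ : j ∈ Finset.univ) =>
    Finset.sum_congr rfl fun i (_ : i ∈ Finset.univ) =>
      (Finset.sum_mul Finset.univ (fun a => ((Y a p j:ℝ):ℂ) * ((Y a q i:ℝ):ℂ)) (v j * w i)).symm]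
  rw [Finset.mul_sum]
  rw [Finset.sum_congr rfl fun j (_ : j ∈ Finset.univ) => Finset.mul_sum Finset.univ _ _]
  have h3 : ∀ j i : Fin N, (2:ℂ) * ((∑ a, ((Y a p j:ℝ):ℂ) * ((Y a q i:ℝ):ℂ)) * (v j * w i))
      = (((if p = q then (1:ℂ) else 0) * (if j = i then (1:ℂ) else 0)
          - (if p = i then (1:ℂ) else 0) * (if j = q then (1:ℂ) else 0))) * (v j * w i) := by
    intro j i
    rw [← mul_assoc, structC Y hskew hortho hspan p j q i]
  rw [Finset.sum_congr rfl fun j (_ : j ∈ Finset.univ) =>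
    Finset.sum_congr rfl fun i (_ : i ∈ Finset.univ) => h3 j i]
  by_cases hpq : p = q
  · subst hpq
    rw [Finset.sum_congr rfl fun j (_ : j ∈ Finset.univ) =>
      Finset.sum_congr rfl fun i (_ : i ∈ Finset.univ) => show
        ((if p = p then (1:ℂ) else 0) * (if j = i then (1:ℂ) else 0)
          - (if p = i then (1:ℂ) else 0) * (if j = p then (1:ℂ) else 0)) * (v j * w i)
        = (if j = i then v j * w i else 0)
            - (if p = i then (if j = p then v j * w i else 0) else 0) from by
      by_cases h5 : j = i <;> by_cases h6 : p = i <;> by_cases h7 : j = p <;> simp_all]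
    rw [Finset.sum_congr rfl fun j (_ : j ∈ Finset.univ) => Finset.sum_sub_distrib _ _]
    rw [Finset.sum_sub_distrib]
    rw [Finset.sum_congr rfl fun j (_ : j ∈ Finset.univ) =>
      Finset.sum_ite_eq Finset.univ j (fun i => v j * w i)]
    rw [Finset.sum_congr rfl fun j (_ : j ∈ Finset.univ) =>
      Finset.sum_ite_eq Finset.univ p (fun i => if j = p then v j * w i else 0)]
    simp only [Finset.mem_univ, if_true]
    rw [Finset.sum_ite_eq' Finset.univ p (fun j => v j * w p)]
    simp only [Finset.mem_univ, if_true, if_pos rfl]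
    ring
  · rw [Finset.sum_congr rfl fun j (_ : j ∈ Finset.univ) =>
      Finset.sum_congr rfl fun i (_ : i ∈ Finset.univ) => show
        ((if p = q then (1:ℂ) else 0) * (if j = i then (1:ℂ) else 0)
          - (if p = i then (1:ℂ) else 0) * (if j = q then (1:ℂ) else 0)) * (v j * w i)
        = -(if p = i then (if j = q then v j * w i else 0) else 0) from by
      by_cases h5 : j = i <;> by_cases h6 : p = i <;> by_cases h7 : j = q <;> simp_all]
    rw [Finset.sum_congr rfl fun j (_ : j ∈ Finset.univ) =>
      (Finset.sum_neg_distrib (f := fun i => if p = i then (if j = q then v j * w i else 0) else 0))]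
    rw [Finset.sum_congr rfl fun j (_ : j ∈ Finset.univ) => congrArg Neg.neg
      (Finset.sum_ite_eq Finset.univ p (fun i => if j = q then v j * w i else 0))]
    simp only [Finset.mem_univ, if_true]
    rw [Finset.sum_neg_distrib, Finset.sum_ite_eq' Finset.univ q (fun j => v j * w p)]
    simp only [Finset.mem_univ, if_true, if_neg hpq]
    ring

include hskew hortho hspan in
lemma cross {k l : Fin n} (hkl : k ≠ l) :
    (2:ℂ) • (∑ a, factor2Map n N k l ((Y a).map Complex.ofReal) ((Y a).map Complex.ofReal))
      + permMap n N (Equiv.swap k l) = Cmap n N k l := by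
  apply tp_ext
  intro x
  have hF : (∑ a, factor2Map n N k l ((Y a).map Complex.ofReal) ((Y a).map Complex.ofReal))
        (tprod ℂ x)
      = ∑ p, ∑ q, (∑ a, (((Y a).map Complex.ofReal) *ᵥ (x k)) p
            * (((Y a).map Complex.ofReal) *ᵥ (x l)) q) •
          (tprod ℂ (update (update x k (bv N p)) l (bv N q)) : TP n N) := by
    rw [LinearMap.sum_apply]
    rw [Finset.sum_congr rfl fun a (_ : a ∈ Finset.univ) => by
      rw [factor2Map_tprod hkl, Matrix.toLin'_apply, Matrix.toLin'_apply, texpand hkl]]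
    rw [Finset.sum_comm]
    refine Finset.sum_congr rfl fun p _ => ?_
    rw [Finset.sum_comm]
    exact Finset.sum_congr rfl fun q _ => (Finset.sum_smul).symm
  rw [LinearMap.add_apply, LinearMap.smul_apply, hF, perm_apply hkl, Cmap_apply hkl]
  rw [Finset.smul_sum, ← Finset.sum_add_distrib]
  refine Finset.sum_congr rfl fun p _ => ?_
  rw [Finset.smul_sum, ← Finset.sum_add_distrib]
  refine Finset.sum_congr rfl fun q _ => ?_
  rw [smul_smul, ← add_smul]
  congr 1
  exact scalar_key Y hskew hortho hspan (x k) (x l) p q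

end Cross

/-! ### Combinatorial sum splitting -/

lemma pair_split {M : Type*} [AddCommMonoid M] (h : Fin n × Fin n → M) :
    ∑ p : Fin n × Fin n, h p
      = (∑ k : Fin n, h (k, k))
        + ∑ p ∈ Finset.univ.filter (fun p : Fin n × Fin n => p.1 < p.2),
            (h p + h p.swap) := by
  classical
  have h1 := Finset.sum_filter_add_sum_filter_not (Finset.univ : Finset (Fin n × Fin n))
    (fun p => p.1 = p.2) h
  have h2 := Finset.sum_filter_add_sum_filter_not
    (Finset.univ.filter (fun p : Fin n × Fin n => ¬ p.1 = p.2)) (fun p => p.1 < p.2) h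
  rw [Finset.filter_filter, Finset.filter_filter] at h2
  have e1 : (Finset.univ.filter (fun p : Fin n × Fin n => ¬p.1 = p.2 ∧ p.1 < p.2))
      = Finset.univ.filter (fun p : Fin n × Fin n => p.1 < p.2) :=
    Finset.filter_congr fun p _ => ⟨fun hp => hp.2, fun hp => ⟨ne_of_lt hp, hp⟩⟩
  have e2 : (Finset.univ.filter (fun p : Fin n × Fin n => ¬p.1 = p.2 ∧ ¬p.1 < p.2))
      = Finset.univ.filter (fun p : Fin n × Fin n => p.2 < p.1) :=
    Finset.filter_congr fun p _ =>
      ⟨fun hp => lt_of_le_of_ne (le_of_not_gt hp.2) (fun he => hp.1 he.symm),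
       fun hp => ⟨(ne_of_lt hp).symm, not_lt_of_gt hp⟩⟩
  rw [e1, e2] at h2
  have e3 : ∑ p ∈ Finset.univ.filter (fun p : Fin n × Fin n => p.2 < p.1), h p
      = ∑ p ∈ Finset.univ.filter (fun p : Fin n × Fin n => p.1 < p.2), h p.swap := by
    refine Finset.sum_nbij' (i := Prod.swap) (j := Prod.swap) ?_ ?_ ?_ ?_ ?_
    · intro p hp
      rw [Finset.mem_filter] at hp ⊢
      exact ⟨Finset.mem_univ _, hp.2⟩
    · intro p hp
      rw [Finset.mem_filter] at hp ⊢
      exact ⟨Finset.mem_univ _, hp.2⟩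
    · intro p _; exact Prod.swap_swap p
    · intro p _; exact Prod.swap_swap p
    · intro p _; rw [Prod.swap_swap]
  have e4 : ∑ p ∈ Finset.univ.filter (fun p : Fin n × Fin n => p.1 = p.2), h p
      = ∑ k : Fin n, h (k, k) := by
    refine Finset.sum_nbij' (i := fun p => p.1) (j := fun k => (k, k)) ?_ ?_ ?_ ?_ ?_
    · intro p _; exact Finset.mem_univ _
    · intro k _
      rw [Finset.mem_filter]
      exact ⟨Finset.mem_univ _, rfl⟩
    · intro p hp
      rw [Finset.mem_filter] at hp
      exact Prod.ext rfl hp.2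
    · intro k _; rfl
    · intro p hp
      rw [Finset.mem_filter] at hp
      rw [show ((p.1, p.1) : Fin n × Fin n) = p from Prod.ext rfl hp.2]
  rw [← h1, ← h2, e3, e4, Finset.sum_add_distrib]

lemma swapsum {M : Type*} [AddCommMonoid M]
    [DecidablePred (fun τ : Equiv.Perm (Fin n) => τ.IsSwap)]
    (F : Equiv.Perm (Fin n) → M) :
    ∑ p ∈ Finset.univ.filter (fun p : Fin n × Fin n => p.1 < p.2), F (Equiv.swap p.1 p.2)
      = ∑ τ ∈ Finset.univ.filter (fun τ : Equiv.Perm (Fin n) => τ.IsSwap), F τ := by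
  refine Finset.sum_bij (fun p _ => Equiv.swap p.1 p.2) ?_ ?_ ?_ ?_
  · intro p hp
    rw [Finset.mem_filter] at hp ⊢
    exact ⟨Finset.mem_univ _, ⟨p.1, p.2, ne_of_lt hp.2, rfl⟩⟩
  · intro p hp q hq heq
    rw [Finset.mem_filter] at hp hq
    have h1 : Equiv.swap p.1 p.2 q.1 = q.2 := by
      have h0 := congrArg (fun e : Equiv.Perm (Fin n) => e q.1) heq
      simpa [Equiv.swap_apply_left] using h0
    rcases eq_or_ne q.1 p.1 with h2 | h2
    · rw [h2, Equiv.swap_apply_left] at h1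
      exact Prod.ext h2.symm h1
    · rcases eq_or_ne q.1 p.2 with h3 | h3
      · rw [h3, Equiv.swap_apply_right] at h1
        have hlt : p.2 < p.1 := by
          have := hq.2
          rw [h3, ← h1] at this
          exact this
        exact absurd (lt_trans hp.2 hlt) (lt_irrefl _)
      · rw [Equiv.swap_apply_of_ne_of_ne h2 h3] at h1
        have := hq.2
        rw [h1] at this
        exact absurd this (lt_irrefl _)
  · intro τ hτ
    rw [Finset.mem_filter] at hτ
    obtain ⟨a, b, hab, rfl⟩ := hτ.2
    rcases hab.lt_or_gt with hlt | hlt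
    · exact ⟨(a, b), Finset.mem_filter.mpr ⟨Finset.mem_univ _, hlt⟩, rfl⟩
    · exact ⟨(b, a), Finset.mem_filter.mpr ⟨Finset.mem_univ _, hlt⟩, Equiv.swap_comm b a⟩
  · intro p _; rfl

lemma Dcomp (X : Matrix (Fin N) (Fin N) ℂ) :
    Dmap n N X ∘ₗ Dmap n N X
      = (∑ k : Fin n, factorMap n N k (X * X))
        + ∑ p ∈ Finset.univ.filter (fun p : Fin n × Fin n => p.1 < p.2),
            (factor2Map n N p.1 p.2 X X + factor2Map n N p.2 p.1 X X) := by
  have hmul : ∀ f g : TP n N →ₗ[ℂ] TP n N, f ∘ₗ g = f * g := fun _ _ => rfl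
  rw [Dmap, hmul, Finset.sum_mul]
  rw [Finset.sum_congr rfl fun k (_ : k ∈ Finset.univ) =>
    Finset.mul_sum Finset.univ (fun l => factorMap n N l X) (factorMap n N k X)]
  rw [← Finset.sum_product', Finset.univ_product_univ]
  rw [pair_split (fun p : Fin n × Fin n => factorMap n N p.1 X * factorMap n N p.2 X)]
  congr 1
  · exact Finset.sum_congr rfl fun k _ => by
      rw [← hmul, factorMap_comp_same]
  · refine Finset.sum_congr rfl fun p hp => ?_
    have hne : p.1 ≠ p.2 := ne_of_lt (Finset.mem_filter.mp hp).2
    simp only [Prod.fst_swap, Prod.snd_swap]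
    rw [← hmul, ← hmul, factorMap_comp_ne hne, factorMap_comp_ne (Ne.symm hne)]

end CasimirAux

set_option maxHeartbeats 2000000 in
open scoped Classical in
/-- For any ℝ-basis `(Y_1, …, Y_{N(N−1)/2})` of `so(N)` (antisymmetric real
matrices) orthonormal for `⟨X,Y⟩ = −Tr(XY)`, on `(ℂ^N)^{⊗n}` one has
`(∑_{τ ∈ T_n} P_τ) + ∑_a D(Y_a) ∘ D(Y_a) = −((N−1)n/2) · Id + ∑_{1 ≤ k < l ≤ n} C_{kl}`. -/
theorem casimir_orthogonal (n N : ℕ) (hn : 1 ≤ n) (hN : 1 ≤ N)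
    (Y : Fin (N * (N - 1) / 2) → Matrix (Fin N) (Fin N) ℝ)
    (hskew : ∀ a, (Y a).transpose = -(Y a))
    (hortho : ∀ a b, -Matrix.trace (Y a * Y b) = if a = b then (1 : ℝ) else 0)
    (hspan : ∀ Z : Matrix (Fin N) (Fin N) ℝ, Z.transpose = -Z →
      ∃ c : Fin (N * (N - 1) / 2) → ℝ, Z = ∑ a, c a • Y a) :
    (∑ τ ∈ Finset.univ.filter (fun τ : Equiv.Perm (Fin n) => τ.IsSwap), permMap n N τ)
        + ∑ a, Dmap n N ((Y a).map Complex.ofReal) ∘ₗ Dmap n N ((Y a).map Complex.ofReal)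
      = (-(((N : ℂ) - 1) * (n : ℂ) / 2)) • LinearMap.id
          + ∑ p ∈ Finset.univ.filter (fun p : Fin n × Fin n => p.1 < p.2),
              Cmap n N p.1 p.2 := by
  have hcross : ∀ p : Fin n × Fin n, p.1 < p.2 →
      (∑ a, (factor2Map n N p.1 p.2 ((Y a).map Complex.ofReal) ((Y a).map Complex.ofReal)
        + factor2Map n N p.2 p.1 ((Y a).map Complex.ofReal) ((Y a).map Complex.ofReal)))
        + permMap n N (Equiv.swap p.1 p.2)
      = Cmap n N p.1 p.2 := by
    intro p hp
    have hne : p.1 ≠ p.2 := ne_of_lt hp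
    have hstep : (∑ a, (factor2Map n N p.1 p.2 ((Y a).map Complex.ofReal)
          ((Y a).map Complex.ofReal)
        + factor2Map n N p.2 p.1 ((Y a).map Complex.ofReal) ((Y a).map Complex.ofReal)))
        = (2:ℂ) • ∑ a, factor2Map n N p.1 p.2 ((Y a).map Complex.ofReal)
            ((Y a).map Complex.ofReal) := by
      rw [Finset.sum_add_distrib, two_smul]
      congr 1
      exact Finset.sum_congr rfl fun a _ => CasimirAux.factor2Map_comm hne _ _
    rw [hstep]
    exact CasimirAux.cross Y hskew hortho hspan hne
  rw [Finset.sum_congr rfl fun a (_ : a ∈ Finset.univ) => CasimirAux.Dcomp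
    ((Y a).map Complex.ofReal)]
  rw [Finset.sum_add_distrib]
  have hdiag : ∑ a, ∑ k : Fin n,
        factorMap n N k ((Y a).map Complex.ofReal * (Y a).map Complex.ofReal)
      = (-(((N : ℂ) - 1) * (n : ℂ) / 2)) • LinearMap.id := by
    rw [Finset.sum_comm]
    have hk : ∀ k : Fin n, ∑ a,
          factorMap n N k ((Y a).map Complex.ofReal * (Y a).map Complex.ofReal)
        = (-(((N:ℂ)-1)/2)) • (LinearMap.id : TP n N →ₗ[ℂ] TP n N) := by
      intro k
      have h1 : ∑ a, factorMap n N k ((Y a).map Complex.ofReal * (Y a).map Complex.ofReal)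
          = CasimirAux.factorL n N k
              (∑ a, ((Y a).map Complex.ofReal * (Y a).map Complex.ofReal)) := by
        rw [map_sum]
        rfl
      rw [h1, CasimirAux.sumYsq Y hskew hortho hspan, map_smul]
      rw [show CasimirAux.factorL n N k (1 : Matrix (Fin N) (Fin N) ℂ)
        = factorMap n N k 1 from rfl, CasimirAux.factorMap_one]
    rw [Finset.sum_congr rfl fun k (_ : k ∈ Finset.univ) => hk k]
    rw [Finset.sum_const, Finset.card_univ, Fintype.card_fin]
    rw [← Nat.cast_smul_eq_nsmul ℂ, smul_smul]
    congr 1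
    ring
  have hc2 : (∑ a, ∑ p ∈ Finset.univ.filter (fun p : Fin n × Fin n => p.1 < p.2),
        (factor2Map n N p.1 p.2 ((Y a).map Complex.ofReal) ((Y a).map Complex.ofReal)
          + factor2Map n N p.2 p.1 ((Y a).map Complex.ofReal) ((Y a).map Complex.ofReal)))
        + ∑ p ∈ Finset.univ.filter (fun p : Fin n × Fin n => p.1 < p.2),
            permMap n N (Equiv.swap p.1 p.2)
      = ∑ p ∈ Finset.univ.filter (fun p : Fin n × Fin n => p.1 < p.2),
          Cmap n N p.1 p.2 := by
    rw [Finset.sum_comm, ← Finset.sum_add_distrib]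
    exact Finset.sum_congr rfl fun p hp => hcross p (Finset.mem_filter.mp hp).2
  rw [hdiag]
  rw [← CasimirAux.swapsum (F := permMap n N), ← hc2]
  abel
end
end

section
/- Let n ≥ 1 and let σ ∈ S_n have cycle decomposition σ = c_1 c_2 ⋯ c_{ℓ(σ)} into cycles with pairwise disjoint supports (fixed points included as cycles of length 1, each c_j regarded as an element of S_n). Then for every integer k ≥ 0: S(σ, k, 0) = ∑ over tuples (l_1, …, l_{ℓ(σ)}) of non-negative integers with l_1 + ⋯ + l_{ℓ(σ)} = k of (k! / (l_1! ⋯ l_{ℓ(σ)}!)) · S(c_1, l_1, 0) ⋯ S(c_{ℓ(σ)}, l_{ℓ(σ)}, 0). -/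
noncomputable section

/-- Number of cycles of a permutation of `{0,…,n-1}`, counting fixed points as cycles. -/
def cycCount {n : ℕ} (σ : Equiv.Perm (Fin n)) : ℕ :=
  (n - σ.cycleType.sum) + σ.cycleType.card

/-- `IsPath k f` : `(f 0, f 1, …, f k)` is a path of length `k` in the Cayley graph of
the symmetric group generated by all transpositions. -/
def IsPath {n : ℕ} (k : ℕ) (f : ℕ → Equiv.Perm (Fin n)) : Prop :=
  ∀ i < k, ((f i)⁻¹ * f (i + 1)).IsSwap

/-- The defect of the path `(f 0, …, f k)`: the number of steps along which the number of
cycles decreases by one. -/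
def defect {n : ℕ} (k : ℕ) (f : ℕ → Equiv.Perm (Fin n)) : ℕ :=
  Nat.card {i : Fin k // cycCount (f (i + 1)) + 1 = cycCount (f i)}

/-- `S n σ k d`: the number of paths of length `k` starting at `σ` in the Cayley graph of
`S_n` (generated by transpositions) having defect `d`.  A path starting at `σ` is encoded
by its sequence of steps `τ : Fin k → Perm (Fin n)` (each a transposition), the vertices
visited being `σ * τ_1 * ⋯ * τ_i`. -/
def S (n : ℕ) (σ : Equiv.Perm (Fin n)) (k d : ℕ) : ℕ :=
  Nat.card {τ : Fin k → Equiv.Perm (Fin n) //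
    (∀ i, (τ i).IsSwap) ∧
    defect k (fun i => σ * ((List.ofFn τ).take i).prod) = d}

/-- `#Π_k(σ → σ')`: the number of paths of length `k` from `σ` to `σ'` in the Cayley graph. -/
def pathCount (n : ℕ) (σ σ' : Equiv.Perm (Fin n)) (k : ℕ) : ℕ :=
  Nat.card {τ : Fin k → Equiv.Perm (Fin n) //
    (∀ i, (τ i).IsSwap) ∧ σ * (List.ofFn τ).prod = σ'}


section Dev
open Equiv Equiv.Perm Finset

set_option linter.unusedSectionVars false

variable {α : Type*} [Fintype α] [DecidableEq α]

/-- agreement of iterates when the orbit avoids `{a,b}` -/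
lemma iterate_agree {π : Perm α} {a b x : α}
    (h : ∀ i : ℕ, (π ^ i) x ≠ a ∧ (π ^ i) x ≠ b) :
    ∀ t : ℕ, ((π * Equiv.swap a b) ^ t) x = (π ^ t) x := by
  intro t
  induction t with
  | zero => simp
  | succ t ih =>
    rw [pow_succ', Perm.mul_apply, Perm.mul_apply, ih,
      Equiv.swap_apply_of_ne_of_ne (h t).1 (h t).2, ← Perm.mul_apply, ← pow_succ']

lemma pow_apply_mod {π : Perm α} {x : α} {p : ℕ} (hp : (π ^ p) x = x) (t : ℕ) :
    (π ^ t) x = (π ^ (t % p)) x := by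
  have key : ∀ q : ℕ, ((π ^ p) ^ q) x = x := by
    intro q
    induction q with
    | zero => rfl
    | succ q ih => rw [pow_succ', Perm.mul_apply, ih, hp]
  conv_lhs => rw [← Nat.div_add_mod t p]
  rw [Nat.add_comm, pow_add, Perm.mul_apply, pow_mul, key]

lemma sameCycle_iff_exists_pow {π : Perm α} {x y : α} :
    π.SameCycle x y ↔ ∃ i : ℕ, (π ^ i) x = y := by
  constructor
  · intro h
    obtain ⟨i, _, hi⟩ := h.exists_pow_eq'
    exact ⟨i, hi⟩
  · rintro ⟨i, rfl⟩
    exact ⟨(i : ℤ), by simp⟩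

lemma exists_minimal_period (π : Perm α) (a : α) :
    ∃ m : ℕ, (0 < m ∧ (π ^ m) a = a) ∧ ∀ j, 0 < j → j < m → (π ^ j) a ≠ a := by
  have hP : ∃ m, 0 < m ∧ (π ^ m) a = a :=
    ⟨orderOf π, orderOf_pos π, by rw [pow_orderOf_eq_one]; rfl⟩
  refine ⟨Nat.find hP, Nat.find_spec hP, fun j hj1 hj2 hj3 => ?_⟩
  exact Nat.find_min hP hj2 ⟨hj1, hj3⟩

section merge

variable {π : Perm α} {a b : α}

lemma T1_aux (h : ¬π.SameCycle a b) {m : ℕ}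
    (hmin : ∀ j, 0 < j → j < m → (π ^ j) a ≠ a) :
    ∀ i, 1 ≤ i → i ≤ m → ((π * Equiv.swap a b) ^ i) b = (π ^ i) a := by
  intro i
  induction i with
  | zero => omega
  | succ i ih =>
    intro _ him
    rcases Nat.eq_zero_or_pos i with rfl | hi
    · simp [Perm.mul_apply]
    · have hia : (π ^ i) a ≠ a := hmin i hi (by omega)
      have hib : (π ^ i) a ≠ b := fun hc => h ⟨(i : ℤ), by simpa using hc⟩
      rw [pow_succ', Perm.mul_apply, Perm.mul_apply, ih hi (by omega),
        Equiv.swap_apply_of_ne_of_ne hia hib, ← Perm.mul_apply, ← pow_succ']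

lemma sameCycle_swap_left_of_sameCycle (hab : a ≠ b) (h : ¬π.SameCycle a b) :
    ∀ y, π.SameCycle a y → (π * Equiv.swap a b).SameCycle b y := by
  obtain ⟨m, ⟨hm0, hm⟩, hmin⟩ := exists_minimal_period π a
  have key := T1_aux (a := a) (b := b) h hmin
  intro y hy
  obtain ⟨i, rfl⟩ := sameCycle_iff_exists_pow.1 hy
  rw [pow_apply_mod hm i]
  rcases Nat.eq_zero_or_pos (i % m) with h0 | h0
  · rw [h0]
    have : ((π * Equiv.swap a b) ^ m) b = a := by rw [key m hm0 le_rfl, hm]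
    exact sameCycle_iff_exists_pow.2 ⟨m, this⟩
  · exact sameCycle_iff_exists_pow.2 ⟨i % m, key _ h0 (Nat.mod_lt _ hm0).le⟩

lemma sameCycle_swap_ab (hab : a ≠ b) (h : ¬π.SameCycle a b) :
    (π * Equiv.swap a b).SameCycle a b :=
  ((sameCycle_swap_left_of_sameCycle hab h) a (Perm.SameCycle.refl _ _)).symm

lemma not_sameCycle_swap_ab (hab : a ≠ b) (h : π.SameCycle a b) :
    ¬(π * Equiv.swap a b).SameCycle a b := by
  obtain ⟨m, ⟨hm0, hm⟩, hmin⟩ := exists_minimal_period π a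
  -- get 0 < j < m with π^j a = b
  obtain ⟨i, hi⟩ := sameCycle_iff_exists_pow.1 h
  have hj : (π ^ (i % m)) a = b := by rw [← pow_apply_mod hm i, hi]
  set j := i % m with hjdef
  have hj0 : 0 < j := by
    rcases Nat.eq_zero_or_pos j with h0 | h0
    · exfalso; apply hab; rw [← hj, h0]; rfl
    · exact h0
  have hjm : j < m := Nat.mod_lt _ hm0
  set ρ := π * Equiv.swap a b with hρ
  have claim : ∀ t, 1 ≤ t → t ≤ m - j → (ρ ^ t) a = (π ^ (j + t)) a := by
    intro t
    induction t with
    | zero => omega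
    | succ t iht =>
      intro _ htm
      rcases Nat.eq_zero_or_pos t with rfl | ht
      · have : ρ a = π b := by simp [hρ, Perm.mul_apply]
        have he : j + (0 + 1) = j + 1 := by omega
        rw [pow_one, this, ← hj, ← Perm.mul_apply, ← pow_succ', he]
      · have h1 : (π ^ (j + t)) a ≠ a := hmin _ (by omega) (by omega)
        have h2 : (π ^ (j + t)) a ≠ b := by
          intro hc
          rw [← hj] at hc
          have : (π ^ t) a = a := by
            have := hc
            rw [pow_add, Perm.mul_apply] at this
            exact (π ^ j).injective this
          exact hmin t ht (by omega) this
        rw [pow_succ', Perm.mul_apply, iht ht (by omega), hρ, Perm.mul_apply,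
          Equiv.swap_apply_of_ne_of_ne h1 h2, ← Perm.mul_apply, ← pow_succ']
        have he : j + t + 1 = j + (t + 1) := by omega
        rw [he]
  have hper : (ρ ^ (m - j)) a = a := by
    rw [claim (m - j) (by omega) le_rfl, Nat.add_sub_cancel' hjm.le, hm]
  intro hc
  obtain ⟨t, ht⟩ := sameCycle_iff_exists_pow.1 hc
  have hr : (ρ ^ (t % (m - j))) a = b := by rw [← pow_apply_mod hper t, ht]
  set r := t % (m - j) with hrdef
  have hr0 : 0 < r := by
    rcases Nat.eq_zero_or_pos r with h0 | h0
    · exfalso; apply hab; rw [← hr, h0]; rfl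
    · exact h0
  have hrm : r < m - j := Nat.mod_lt _ (by omega)
  have : (π ^ (j + r)) a = b := by rw [← claim r hr0 hrm.le, hr]
  rw [← hj, pow_add, Perm.mul_apply] at this
  exact hmin r hr0 (by omega) ((π ^ j).injective this)

end merge

/-- the orbit of `x` under `π` as a finset -/
def orb (π : Perm α) (x : α) : Finset α := Finset.univ.filter (π.SameCycle x)

lemma mem_orb {π : Perm α} {x y : α} : y ∈ orb π x ↔ π.SameCycle x y := by
  simp [orb]

lemma self_mem_orb (π : Perm α) (x : α) : x ∈ orb π x := mem_orb.2 (Perm.SameCycle.refl _ _)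

lemma orb_eq_of_sameCycle {π : Perm α} {x y : α} (h : π.SameCycle x y) :
    orb π x = orb π y := by
  ext z; simp only [mem_orb]
  exact ⟨fun hz => h.symm.trans hz, fun hz => h.trans hz⟩

lemma sameCycle_of_orb_eq {π : Perm α} {x y : α} (h : orb π x = orb π y) :
    π.SameCycle x y := by
  have := self_mem_orb π y
  rw [← h, mem_orb] at this
  exact this

/-- the set of orbits -/
def orbSet (π : Perm α) : Finset (Finset α) := Finset.univ.image (orb π)

/-- the number of cycles (orbits) of `π` -/
def ncyc (π : Perm α) : ℕ := (orbSet π).card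

section mergecount

variable {π : Perm α} {a b : α}

lemma orb_mul_swap_untouched (hax : ¬π.SameCycle a x) (hbx : ¬π.SameCycle b x) :
    orb (π * Equiv.swap a b) x = orb π x := by
  have agree : ∀ t : ℕ, ((π * Equiv.swap a b) ^ t) x = (π ^ t) x := by
    apply iterate_agree
    intro i
    constructor
    · intro hc; exact hax (Perm.SameCycle.symm ⟨(i : ℤ), by simpa using hc⟩)
    · intro hc; exact hbx (Perm.SameCycle.symm ⟨(i : ℤ), by simpa using hc⟩)
  ext y
  simp only [mem_orb, sameCycle_iff_exists_pow]
  constructor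
  · rintro ⟨i, hi⟩; exact ⟨i, by rw [← agree i, hi]⟩
  · rintro ⟨i, hi⟩; exact ⟨i, by rw [agree i, hi]⟩

lemma orb_mul_swap_merge (hab : a ≠ b) (h : ¬π.SameCycle a b) :
    orb (π * Equiv.swap a b) a = orb π a ∪ orb π b := by
  set ρ := π * Equiv.swap a b with hρ
  have step : ∀ z, z ∈ orb π a ∪ orb π b → ρ z ∈ orb π a ∪ orb π b := by
    intro z hz1
    rcases eq_or_ne z a with rfl | hza
    · have : ρ z = π b := by simp [hρ, Perm.mul_apply]
      rw [this]
      exact Finset.mem_union_right _ (mem_orb.2 ⟨1, by simp⟩)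
    rcases eq_or_ne z b with rfl | hzb
    · have : ρ z = π a := by simp [hρ, Perm.mul_apply]
      rw [this]
      exact Finset.mem_union_left _ (mem_orb.2 ⟨1, by simp⟩)
    have hzz : ρ z = π z := by
      simp [hρ, Perm.mul_apply, Equiv.swap_apply_of_ne_of_ne hza hzb]
    rw [hzz]
    rcases Finset.mem_union.1 hz1 with hz2 | hz2
    · exact Finset.mem_union_left _ (mem_orb.2 ((mem_orb.1 hz2).trans ⟨1, by simp⟩))
    · exact Finset.mem_union_right _ (mem_orb.2 ((mem_orb.1 hz2).trans ⟨1, by simp⟩))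
  apply Finset.Subset.antisymm
  · intro y hy
    obtain ⟨t, rfl⟩ := sameCycle_iff_exists_pow.1 (mem_orb.1 hy)
    clear hy
    induction t with
    | zero => simp [Finset.mem_union, self_mem_orb]
    | succ t ih =>
      rw [pow_succ', Perm.mul_apply]
      exact step _ ih
  · intro y hy
    rcases Finset.mem_union.1 hy with hy1 | hy1
    · exact mem_orb.2 ((sameCycle_swap_ab hab h).trans
        (sameCycle_swap_left_of_sameCycle hab h y (mem_orb.1 hy1)))
    · have hsymm : ¬π.SameCycle b a := fun hc => h hc.symm
      have : (π * Equiv.swap b a).SameCycle a y :=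
        sameCycle_swap_left_of_sameCycle (Ne.symm hab) hsymm y (mem_orb.1 hy1)
      rw [Equiv.swap_comm b a] at this
      exact mem_orb.2 this

end mergecount

lemma orbSet_mul_swap_merge {π : Perm α} {a b : α} (hab : a ≠ b) (h : ¬π.SameCycle a b) :
    orbSet (π * Equiv.swap a b) =
      insert (orb (π * Equiv.swap a b) a) (((orbSet π).erase (orb π a)).erase (orb π b)) := by
  set ρ := π * Equiv.swap a b with hρ
  have hmerge := orb_mul_swap_merge hab h
  ext s
  simp only [orbSet, Finset.mem_image, Finset.mem_univ, true_and, Finset.mem_insert,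
    Finset.mem_erase]
  constructor
  · rintro ⟨x, rfl⟩
    by_cases hx : ρ.SameCycle a x
    · exact Or.inl (orb_eq_of_sameCycle hx).symm
    · have hxa : ¬π.SameCycle a x := fun hc =>
        hx (mem_orb.1 (hmerge ▸ Finset.mem_union_left _ (mem_orb.2 hc)))
      have hxb : ¬π.SameCycle b x := fun hc =>
        hx (mem_orb.1 (hmerge ▸ Finset.mem_union_right _ (mem_orb.2 hc)))
      have huntouched : orb ρ x = orb π x := orb_mul_swap_untouched hxa hxb
      refine Or.inr ⟨?_, ?_, ⟨x, huntouched.symm⟩⟩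
      · rw [huntouched]
        exact fun hc => hxb (sameCycle_of_orb_eq hc.symm)
      · rw [huntouched]
        exact fun hc => hxa (sameCycle_of_orb_eq hc.symm)
  · rintro (rfl | ⟨hsb, hsa, x, rfl⟩)
    · exact ⟨a, rfl⟩
    · have hxa : ¬π.SameCycle a x := fun hc => hsa (orb_eq_of_sameCycle hc.symm)
      have hxb : ¬π.SameCycle b x := fun hc => hsb (orb_eq_of_sameCycle hc.symm)
      exact ⟨x, orb_mul_swap_untouched hxa hxb⟩

lemma ncyc_mul_swap_merge {π : Perm α} {a b : α} (hab : a ≠ b) (h : ¬π.SameCycle a b) :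
    ncyc (π * Equiv.swap a b) + 1 = ncyc π := by
  set ρ := π * Equiv.swap a b with hρ
  have hmerge := orb_mul_swap_merge hab h
  have hA : orb π a ∈ orbSet π := Finset.mem_image.2 ⟨a, Finset.mem_univ a, rfl⟩
  have hB : orb π b ∈ orbSet π := Finset.mem_image.2 ⟨b, Finset.mem_univ b, rfl⟩
  have hAB : orb π a ≠ orb π b := fun hc => h (sameCycle_of_orb_eq hc)
  have hnotin : orb ρ a ∉ ((orbSet π).erase (orb π a)).erase (orb π b) := by
    intro hc
    have hsb : orb ρ a ≠ orb π b := (Finset.mem_erase.1 hc).1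
    obtain ⟨x, -, hx⟩ := Finset.mem_image.1 (Finset.mem_erase.1 (Finset.mem_erase.1 hc).2).2
    have hbmem : b ∈ orb ρ a := hmerge ▸ Finset.mem_union_right _ (self_mem_orb π b)
    rw [← hx] at hbmem
    exact hsb (hx ▸ orb_eq_of_sameCycle (mem_orb.1 hbmem))
  rw [ncyc, ncyc, orbSet_mul_swap_merge hab h, Finset.card_insert_of_notMem hnotin,
    Finset.card_erase_of_mem (Finset.mem_erase.2 ⟨hAB.symm, hB⟩),
    Finset.card_erase_of_mem hA]
  have h2 : 2 ≤ (orbSet π).card := by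
    have := Finset.one_lt_card.2 ⟨orb π a, hA, orb π b, hB, hAB⟩
    omega
  omega

lemma ncyc_mul_swap_split {π : Perm α} {a b : α} (hab : a ≠ b) (h : π.SameCycle a b) :
    ncyc (π * Equiv.swap a b) = ncyc π + 1 := by
  have hns := not_sameCycle_swap_ab hab h
  have key := ncyc_mul_swap_merge (π := π * Equiv.swap a b) hab hns
  rw [mul_assoc, Equiv.swap_mul_self, mul_one] at key
  omega

lemma orb_of_not_mem_support {π : Perm α} {x : α} (hx : x ∉ π.support) :
    orb π x = {x} := by
  ext y
  simp only [mem_orb, Finset.mem_singleton, sameCycle_iff_exists_pow]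
  rw [Perm.notMem_support] at hx
  constructor
  · rintro ⟨i, rfl⟩
    rw [Perm.pow_apply_eq_self_of_apply_eq_self hx]
  · rintro rfl
    exact ⟨0, rfl⟩

lemma orb_of_mem_support {π : Perm α} {x : α} (hx : x ∈ π.support) :
    orb π x = (π.cycleOf x).support := by
  ext y
  rw [mem_orb, Perm.mem_support_cycleOf_iff]
  exact ⟨fun h => ⟨h, hx⟩, fun h => h.1⟩

lemma orbSet_eq (π : Perm α) :
    orbSet π = ((Finset.univ \ π.support).image fun x => ({x} : Finset α)) ∪
      (π.cycleFactorsFinset.image fun c => c.support) := by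
  ext s
  simp only [orbSet, Finset.mem_image, Finset.mem_univ, true_and, Finset.mem_union,
    Finset.mem_sdiff]
  constructor
  · rintro ⟨x, rfl⟩
    by_cases hx : x ∈ π.support
    · exact Or.inr ⟨π.cycleOf x, Perm.cycleOf_mem_cycleFactorsFinset_iff.2 hx,
        (orb_of_mem_support hx).symm⟩
    · exact Or.inl ⟨x, by simp [hx], (orb_of_not_mem_support hx).symm⟩
  · rintro (⟨x, hx', rfl⟩ | ⟨c, hc, rfl⟩)
    · have hx : x ∉ π.support := by simpa using hx'
      exact ⟨x, orb_of_not_mem_support hx⟩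
    · have hcyc : c.IsCycle := (Perm.mem_cycleFactorsFinset_iff.1 hc).1
      obtain ⟨x, hx⟩ := hcyc.nonempty_support
      have hxs : x ∈ π.support := Perm.mem_cycleFactorsFinset_support_le hc hx
      refine ⟨x, ?_⟩
      rw [orb_of_mem_support hxs, ← Perm.cycle_is_cycleOf hx hc]

lemma ncyc_eq_card (π : Perm α) :
    ncyc π = (Fintype.card α - π.cycleType.sum) + π.cycleType.card := by
  rw [ncyc, orbSet_eq]
  have hdisj : Disjoint ((Finset.univ \ π.support).image fun x => ({x} : Finset α))
      (π.cycleFactorsFinset.image fun c => c.support) := by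
    rw [Finset.disjoint_left]
    rintro s hs1 hs2
    obtain ⟨x, hx, rfl⟩ := Finset.mem_image.1 hs1
    obtain ⟨c, hc, hcs⟩ := Finset.mem_image.1 hs2
    have hxc : x ∈ c.support := by rw [hcs]; exact Finset.mem_singleton_self x
    exact (Finset.mem_sdiff.1 hx).2 (Perm.mem_cycleFactorsFinset_support_le hc hxc)
  rw [Finset.card_union_of_disjoint hdisj]
  congr 1
  · rw [Finset.card_image_of_injective _ (fun x y hxy => Finset.singleton_injective hxy),
      Finset.card_sdiff_of_subset (Finset.subset_univ _), Finset.card_univ, Equiv.Perm.sum_cycleType]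
  · rw [Finset.card_image_of_injOn, Equiv.Perm.cycleType]
    · simp
    · intro c hc d hd hcd
      by_contra hne
      have hdisj2 : _root_.Disjoint c.support d.support :=
        Perm.disjoint_iff_disjoint_support.1
          ((Perm.cycleFactorsFinset_pairwise_disjoint π) hc hd hne)
      have hcyc : c.IsCycle := (Perm.mem_cycleFactorsFinset_iff.1 hc).1
      obtain ⟨x, hx⟩ := hcyc.nonempty_support
      have hcd' : c.support = d.support := hcd
      exact Finset.disjoint_left.1 hdisj2 hx (hcd' ▸ hx)

lemma sameCycle_mem_support {π : Perm α} {a b : α} (hab : a ≠ b) (h : π.SameCycle a b) :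
    a ∈ π.support := by
  by_contra hx
  rw [Perm.notMem_support] at hx
  obtain ⟨i, hi⟩ := sameCycle_iff_exists_pow.1 h
  rw [Perm.pow_apply_eq_self_of_apply_eq_self hx] at hi
  exact hab hi

lemma ncyc_mul_of_disjoint {f g : Perm α} (h : f.Disjoint g) :
    ncyc (f * g) + Fintype.card α = ncyc f + ncyc g := by
  have hsupp : f.support.card + g.support.card ≤ Fintype.card α := by
    rw [← Finset.card_union_of_disjoint (Perm.disjoint_iff_disjoint_support.1 h)]
    exact (Finset.card_le_univ _).trans_eq Finset.card_univ
  have h1 := Equiv.Perm.sum_cycleType f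
  have h2 := Equiv.Perm.sum_cycleType g
  rw [ncyc_eq_card, ncyc_eq_card, ncyc_eq_card, h.cycleType_mul, Multiset.sum_add,
    Multiset.card_add]
  omega

lemma pow_fixed {π : Perm α} {x : α} (hx : x ∉ π.support) (i : ℕ) : (π ^ i) x = x :=
  Perm.pow_apply_eq_self_of_apply_eq_self (Perm.notMem_support.1 hx) i

lemma sameCycle_mul_left_of_disjoint {f g : Perm α} (h : f.Disjoint g) {a b : α}
    (hs : f.SameCycle a b) : (f * g).SameCycle a b := by
  rcases eq_or_ne a b with rfl | hab
  · exact Perm.SameCycle.refl _ _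
  have haf : a ∈ f.support := sameCycle_mem_support hab hs
  have hag : a ∉ g.support := Finset.disjoint_left.1 h.disjoint_support haf
  obtain ⟨i, rfl⟩ := sameCycle_iff_exists_pow.1 hs
  refine sameCycle_iff_exists_pow.2 ⟨i, ?_⟩
  rw [h.commute.mul_pow, Perm.mul_apply, pow_fixed hag]

lemma sameCycle_mul_of_disjoint {f g : Perm α} (h : f.Disjoint g) (a b : α) :
    (f * g).SameCycle a b ↔ f.SameCycle a b ∨ g.SameCycle a b := by
  constructor
  · intro hs
    obtain ⟨i, rfl⟩ := sameCycle_iff_exists_pow.1 hs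
    rw [h.commute.mul_pow, Perm.mul_apply]
    by_cases ha : a ∈ g.support
    · have : (f ^ i) ((g ^ i) a) = (g ^ i) a := by
        apply pow_fixed
        intro hc
        exact Finset.disjoint_left.1 h.disjoint_support hc ((Perm.pow_apply_mem_support).2 ha)
      rw [this]
      exact Or.inr (sameCycle_iff_exists_pow.2 ⟨i, rfl⟩)
    · rw [pow_fixed ha]
      exact Or.inl (sameCycle_iff_exists_pow.2 ⟨i, rfl⟩)
  · rintro (hs | hs)
    · exact sameCycle_mul_left_of_disjoint h hs
    · rw [h.commute.eq]
      exact sameCycle_mul_left_of_disjoint h.symm hs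

open scoped Classical in
/-- the set of transpositions that increase the number of cycles -/
def Ai (σ : Perm α) : Finset (Perm α) :=
  Finset.univ.filter (fun τ => τ.IsSwap ∧ ncyc (σ * τ) = ncyc σ + 1)

lemma mem_Ai {σ τ : Perm α} : τ ∈ Ai σ ↔ τ.IsSwap ∧ ncyc (σ * τ) = ncyc σ + 1 := by
  simp [Ai]

lemma mem_Ai_iff_sameCycle {σ : Perm α} {a b : α} (hab : a ≠ b) :
    Equiv.swap a b ∈ Ai σ ↔ σ.SameCycle a b := by
  rw [mem_Ai]
  constructor
  · rintro ⟨-, h⟩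
    by_contra hns
    have := ncyc_mul_swap_merge hab hns
    omega
  · intro hs
    exact ⟨⟨a, b, hab, rfl⟩, ncyc_mul_swap_split hab hs⟩

/-- the number of strictly monotone paths of length `k` from `σ` -/
def T : ℕ → Perm α → ℕ
  | 0, _ => 1
  | (k+1), σ => ∑ τ ∈ Ai σ, T k (σ * τ)

lemma T_zero (σ : Perm α) : T 0 σ = 1 := rfl

lemma T_succ (k : ℕ) (σ : Perm α) : T (k+1) σ = ∑ τ ∈ Ai σ, T k (σ * τ) := rfl

lemma support_subset_of_mem_Ai {σ τ : Perm α} (h : τ ∈ Ai σ) : τ.support ⊆ σ.support := by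
  obtain ⟨⟨a, b, hab, rfl⟩, -⟩ := mem_Ai.1 h
  have hs : σ.SameCycle a b := (mem_Ai_iff_sameCycle hab).1 h
  rw [Equiv.Perm.support_swap hab]
  intro x hx
  rcases Finset.mem_insert.1 hx with rfl | hx
  · exact sameCycle_mem_support hab hs
  · rw [Finset.mem_singleton.1 hx]
    exact sameCycle_mem_support (Ne.symm hab) hs.symm

lemma Ai_mul_of_disjoint {f g : Perm α} (h : f.Disjoint g) :
    Ai (f * g) = Ai f ∪ Ai g := by
  ext τ
  rw [Finset.mem_union]
  constructor
  · intro hτ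
    obtain ⟨⟨a, b, hab, rfl⟩, -⟩ := mem_Ai.1 hτ
    have hsc : (f * g).SameCycle a b := (mem_Ai_iff_sameCycle hab).1 hτ
    rcases (sameCycle_mul_of_disjoint h a b).1 hsc with hs | hs
    · exact Or.inl ((mem_Ai_iff_sameCycle hab).2 hs)
    · exact Or.inr ((mem_Ai_iff_sameCycle hab).2 hs)
  · rintro (hm | hm)
    · obtain ⟨⟨a, b, hab, rfl⟩, -⟩ := mem_Ai.1 hm
      have hs : f.SameCycle a b := (mem_Ai_iff_sameCycle hab).1 hm
      exact (mem_Ai_iff_sameCycle hab).2 ((sameCycle_mul_of_disjoint h a b).2 (Or.inl hs))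
    · obtain ⟨⟨a, b, hab, rfl⟩, -⟩ := mem_Ai.1 hm
      have hs : g.SameCycle a b := (mem_Ai_iff_sameCycle hab).1 hm
      exact (mem_Ai_iff_sameCycle hab).2 ((sameCycle_mul_of_disjoint h a b).2 (Or.inr hs))

lemma Ai_disjoint_of_disjoint {f g : Perm α} (h : f.Disjoint g) :
    Disjoint (Ai f) (Ai g) := by
  rw [Finset.disjoint_left]
  intro τ h1 h2
  obtain ⟨⟨a, b, hab, rfl⟩, -⟩ := mem_Ai.1 h1
  have hs1 : f.SameCycle a b := (mem_Ai_iff_sameCycle hab).1 h1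
  have hs2 : g.SameCycle a b := (mem_Ai_iff_sameCycle hab).1 h2
  exact Finset.disjoint_left.1 h.disjoint_support
    (sameCycle_mem_support hab hs1) (sameCycle_mem_support hab hs2)

lemma disjoint_mul_of_mem_Ai {f g τ : Perm α} (h : f.Disjoint g) (hτ : τ ∈ Ai f) :
    (f * τ).Disjoint g := by
  rw [Perm.disjoint_iff_disjoint_support] at h ⊢
  refine Finset.disjoint_left.2 fun x hx hxg => ?_
  have : x ∈ f.support ∪ τ.support := Perm.support_mul_le f τ hx
  rcases Finset.mem_union.1 this with hx1 | hx1
  · exact Finset.disjoint_left.1 h hx1 hxg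
  · exact Finset.disjoint_left.1 h (support_subset_of_mem_Ai hτ hx1) hxg

lemma commute_of_mem_Ai {f g τ : Perm α} (h : f.Disjoint g) (hτ : τ ∈ Ai f) :
    Commute τ g := by
  apply Equiv.Perm.Disjoint.commute
  rw [Perm.disjoint_iff_disjoint_support]
  refine Finset.disjoint_left.2 fun x hx hxg => ?_
  exact Finset.disjoint_left.1 h.disjoint_support (support_subset_of_mem_Ai hτ hx) hxg

theorem T_mul_disjoint : ∀ (k : ℕ) {f g : Perm α}, f.Disjoint g →
    T k (f * g) = ∑ p ∈ Finset.HasAntidiagonal.antidiagonal k, (k.choose p.1) * T p.1 f * T p.2 g := by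
  intro k
  induction k with
  | zero => intro f g h; simp [T_zero]
  | succ k ih =>
    intro f g h
    rw [T_succ, Ai_mul_of_disjoint h, Finset.sum_union (Ai_disjoint_of_disjoint h)]
    have e1 : ∑ τ ∈ Ai f, T k (f * g * τ) =
        ∑ p ∈ Finset.HasAntidiagonal.antidiagonal k, (k.choose p.1) * T (p.1 + 1) f * T p.2 g := by
      have : ∀ τ ∈ Ai f, T k (f * g * τ) =
          ∑ p ∈ Finset.HasAntidiagonal.antidiagonal k, (k.choose p.1) * T p.1 (f * τ) * T p.2 g := by
        intro τ hτ
        have hcomm : g * τ = τ * g := (commute_of_mem_Ai h hτ).symm.eq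
        rw [mul_assoc, hcomm, ← mul_assoc]
        exact ih (disjoint_mul_of_mem_Ai h hτ)
      rw [Finset.sum_congr rfl this, Finset.sum_comm]
      refine Finset.sum_congr rfl fun p _ => ?_
      rw [T_succ, Finset.mul_sum, Finset.sum_mul]
    have e2 : ∑ τ ∈ Ai g, T k (f * g * τ) =
        ∑ p ∈ Finset.HasAntidiagonal.antidiagonal k, (k.choose p.1) * T p.1 f * T (p.2 + 1) g := by
      have : ∀ τ ∈ Ai g, T k (f * g * τ) =
          ∑ p ∈ Finset.HasAntidiagonal.antidiagonal k, (k.choose p.1) * T p.1 f * T p.2 (g * τ) := by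
        intro τ hτ
        rw [mul_assoc]
        exact ih (disjoint_mul_of_mem_Ai h.symm hτ).symm
      rw [Finset.sum_congr rfl this, Finset.sum_comm]
      refine Finset.sum_congr rfl fun p _ => ?_
      rw [T_succ, Finset.mul_sum]
    rw [e1, e2]
    -- now the binomial identity
    rw [Finset.Nat.sum_antidiagonal_succ
      (f := fun q => ((k+1).choose q.1) * T q.1 f * T q.2 g)]
    have pascal : ∀ p : ℕ × ℕ, ((k+1).choose (p.1+1)) * T (p.1+1) f * T p.2 g =
        (k.choose p.1) * T (p.1+1) f * T p.2 g + (k.choose (p.1+1)) * T (p.1+1) f * T p.2 g := by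
      intro p
      rw [Nat.choose_succ_succ]
      ring
    rw [Finset.sum_congr rfl (fun p _ => pascal p), Finset.sum_add_distrib]
    have e3 : ∑ p ∈ Finset.HasAntidiagonal.antidiagonal k, (k.choose p.1) * T p.1 f * T (p.2 + 1) g =
        (k+1).choose 0 * T 0 f * T (k+1) g +
          ∑ p ∈ Finset.HasAntidiagonal.antidiagonal k, (k.choose (p.1+1)) * T (p.1+1) f * T p.2 g := by
      have h1 := Finset.Nat.sum_antidiagonal_succ
        (n := k) (f := fun q => (k.choose q.1) * T q.1 f * T q.2 g)
      have h2 := Finset.Nat.sum_antidiagonal_succ'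
        (n := k) (f := fun q => (k.choose q.1) * T q.1 f * T q.2 g)
      simp only [Nat.choose_succ_self, Nat.choose_zero_right, zero_mul, zero_add] at h1 h2
      rw [← h2, h1]
      simp [T_zero]
    rw [e3]
    ring

section counting

lemma ncyc_step {π : Perm α} {a b : α} (hab : a ≠ b) :
    ncyc (π * Equiv.swap a b) = ncyc π + 1 ∨ ncyc (π * Equiv.swap a b) + 1 = ncyc π := by
  by_cases h : π.SameCycle a b
  · exact Or.inl (ncyc_mul_swap_split hab h)
  · exact Or.inr (ncyc_mul_swap_merge hab h)

variable {n : ℕ}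

lemma cycCount_eq_ncyc (σ : Perm (Fin n)) : cycCount σ = ncyc σ := by
  rw [ncyc_eq_card, Fintype.card_fin]; rfl

lemma defect_eq_zero_iff {k : ℕ} {f : ℕ → Perm (Fin n)}
    (hstep : ∀ i < k, ∃ a b, a ≠ b ∧ f (i+1) = f i * Equiv.swap a b) :
    defect k f = 0 ↔ ∀ i < k, ncyc (f (i+1)) = ncyc (f i) + 1 := by
  rw [defect, Nat.card_eq_zero]
  constructor
  · intro h i hi
    obtain ⟨a, b, hab, hfe⟩ := hstep i hi
    have hdich := ncyc_step (π := f i) hab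
    rw [← hfe] at hdich
    rcases hdich with h1 | h1
    · exact h1
    · exfalso
      rcases h with hemp | hinf
      · exact hemp.elim ⟨⟨i, hi⟩, by rw [cycCount_eq_ncyc, cycCount_eq_ncyc]; exact h1⟩
      · exact not_finite {i : Fin k // cycCount (f (i + 1)) + 1 = cycCount (f i)}
  · intro h
    refine Or.inl ⟨?_⟩
    rintro ⟨i, hi⟩
    have h2 := h i i.2
    rw [cycCount_eq_ncyc, cycCount_eq_ncyc] at hi
    omega

/-- the prefix products of a path -/
def pref (σ : Perm (Fin n)) {k : ℕ} (τ : Fin k → Perm (Fin n)) (i : ℕ) : Perm (Fin n) :=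
  σ * ((List.ofFn τ).take i).prod

lemma pref_zero (σ : Perm (Fin n)) {k : ℕ} (τ : Fin k → Perm (Fin n)) :
    pref σ τ 0 = σ := by simp [pref]

lemma pref_succ (σ : Perm (Fin n)) {k : ℕ} (τ : Fin k → Perm (Fin n)) {i : ℕ} (hi : i < k) :
    pref σ τ (i+1) = pref σ τ i * τ ⟨i, hi⟩ := by
  unfold pref
  rw [List.prod_take_succ _ i (by simpa using hi), ← mul_assoc]
  congr 1
  simp [List.get_ofFn]

/-- the defect-zero path condition -/
def Q (σ : Perm (Fin n)) {k : ℕ} (τ : Fin k → Perm (Fin n)) : Prop :=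
  (∀ i, (τ i).IsSwap) ∧ ∀ i : ℕ, ∀ _ : i < k, ncyc (pref σ τ (i+1)) = ncyc (pref σ τ i) + 1

lemma S_eq_card_Q (σ : Perm (Fin n)) (k : ℕ) :
    S n σ k 0 = Nat.card {τ : Fin k → Perm (Fin n) // Q σ τ} := by
  rw [S]
  apply Nat.card_congr (Equiv.subtypeEquivRight _)
  intro τ
  refine and_congr_right fun hsw => ?_
  have : (fun i => σ * ((List.ofFn τ).take i).prod) = pref σ τ := rfl
  rw [this]
  refine (defect_eq_zero_iff fun i hi => ?_).trans ?_
  · obtain ⟨a, b, hab, heq⟩ := hsw ⟨i, hi⟩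
    exact ⟨a, b, hab, by rw [pref_succ σ τ hi, heq]⟩
  · constructor
    · intro h; exact fun i hi => h i hi
    · intro h; exact fun i hi => h i hi

lemma pref_cons (σ : Perm (Fin n)) {k : ℕ} (τ : Fin (k+1) → Perm (Fin n)) (i : ℕ) :
    pref σ τ (i+1) = pref (σ * τ 0) (Fin.tail τ) i := by
  unfold pref
  rw [List.ofFn_succ, List.take_succ_cons, List.prod_cons, ← mul_assoc]
  rfl

lemma Q_cons_iff (σ : Perm (Fin n)) {k : ℕ} (τ : Fin (k+1) → Perm (Fin n)) :
    Q σ τ ↔ τ 0 ∈ Ai σ ∧ Q (σ * τ 0) (Fin.tail τ) := by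
  constructor
  · rintro ⟨hsw, hst⟩
    refine ⟨mem_Ai.2 ⟨hsw 0, ?_⟩, fun i => hsw i.succ, fun i hi => ?_⟩
    · have h0 := hst 0 (Nat.succ_pos k)
      rw [pref_cons σ τ 0, pref_zero, pref_zero] at h0
      exact h0
    · have h1 := hst (i+1) (by omega)
      rw [pref_cons, pref_cons] at h1
      exact h1
  · rintro ⟨hmem, hsw', hst'⟩
    obtain ⟨hsw0, hn0⟩ := mem_Ai.1 hmem
    refine ⟨fun i => ?_, fun i hi => ?_⟩
    · refine Fin.cases ?_ ?_ i
      · exact hsw0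
      · exact fun j => hsw' j
    · cases i with
      | zero =>
        rw [pref_cons σ τ 0, pref_zero, pref_zero]
        exact hn0
      | succ i =>
        rw [pref_cons, pref_cons]
        exact hst' i (by omega)

lemma nat_card_sigma {ι : Type*} [Fintype ι] (F : ι → Type*) [∀ i, Finite (F i)] :
    Nat.card (Sigma F) = ∑ i, Nat.card (F i) := by
  classical
  letI : ∀ i, Fintype (F i) := fun i => Fintype.ofFinite _
  rw [Nat.card_eq_fintype_card, Fintype.card_sigma]
  exact Finset.sum_congr rfl fun i _ => (Nat.card_eq_fintype_card).symm

theorem S_eq_T : ∀ (k : ℕ) (σ : Perm (Fin n)), S n σ k 0 = T k σ := by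
  intro k
  induction k with
  | zero =>
    intro σ
    rw [S_eq_card_Q, T_zero]
    have huniv : ∀ τ : Fin 0 → Perm (Fin n), Q σ τ :=
      fun τ => ⟨fun i => i.elim0, fun i hi => absurd hi (by omega)⟩
    rw [Nat.card_congr (Equiv.subtypeUnivEquiv huniv)]
    exact Nat.card_unique
  | succ k ih =>
    intro σ
    rw [S_eq_card_Q, T_succ]
    have e1 : {τ : Fin (k+1) → Perm (Fin n) // Q σ τ} ≃
        {p : Perm (Fin n) × (Fin k → Perm (Fin n)) // p.1 ∈ Ai σ ∧ Q (σ * p.1) p.2} :=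
      (Equiv.subtypeEquiv (Fin.consEquiv fun _ => Perm (Fin n)).symm
        (fun τ => Q_cons_iff σ τ))
    have e2 : {p : Perm (Fin n) × (Fin k → Perm (Fin n)) // p.1 ∈ Ai σ ∧ Q (σ * p.1) p.2} ≃
        Σ t : Perm (Fin n), {τ' : Fin k → Perm (Fin n) // t ∈ Ai σ ∧ Q (σ * t) τ'} :=
      Equiv.subtypeProdEquivSigmaSubtype
        (fun (a : Perm (Fin n)) (b : Fin k → Perm (Fin n)) => a ∈ Ai σ ∧ Q (σ * a) b)
    rw [Nat.card_congr (e1.trans e2), nat_card_sigma]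
    have key : ∀ t : Perm (Fin n),
        Nat.card {τ' : Fin k → Perm (Fin n) // t ∈ Ai σ ∧ Q (σ * t) τ'} =
          if t ∈ Ai σ then T k (σ * t) else 0 := by
      intro t
      by_cases ht : t ∈ Ai σ
      · rw [if_pos ht, ← ih (σ * t), S_eq_card_Q]
        exact Nat.card_congr (Equiv.subtypeEquivRight fun τ' => by simp [ht])
      · rw [if_neg ht, Nat.card_eq_zero]
        exact Or.inl ⟨fun x => ht x.2.1⟩
    rw [Finset.sum_congr rfl fun t _ => key t, Finset.sum_ite_mem, Finset.univ_inter]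

end counting


section final

variable {n : ℕ}

lemma Ai_one : Ai (1 : Perm (Fin n)) = ∅ := by
  ext τ
  simp only [Finset.notMem_empty, iff_false]
  intro hτ
  obtain ⟨⟨a, b, hab, rfl⟩, -⟩ := mem_Ai.1 hτ
  have hs : (1 : Perm (Fin n)).SameCycle a b := (mem_Ai_iff_sameCycle hab).1 hτ
  obtain ⟨i, hi⟩ := sameCycle_iff_exists_pow.1 hs
  rw [one_pow] at hi
  exact hab hi

lemma T_one (k : ℕ) : T k (1 : Perm (Fin n)) = if k = 0 then 1 else 0 := by
  cases k with
  | zero => rfl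
  | succ k => rw [T_succ, Ai_one]; simp

lemma sum_antidiagonalTuple_succ {m k : ℕ} (F : (Fin (m+1) → ℕ) → ℚ) :
    ∑ l ∈ Finset.Nat.antidiagonalTuple (m+1) k, F l =
      ∑ p ∈ Finset.HasAntidiagonal.antidiagonal k, ∑ l' ∈ Finset.Nat.antidiagonalTuple m p.2,
        F (Fin.cons p.1 l') := by
  have h1 : ∑ x ∈ (Finset.HasAntidiagonal.antidiagonal k).sigma
      (fun p => Finset.Nat.antidiagonalTuple m p.2), F (Fin.cons x.1.1 x.2) =
      ∑ l ∈ Finset.Nat.antidiagonalTuple (m+1) k, F l := by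
    apply Finset.sum_bij (i := fun (x : Σ _p : ℕ × ℕ, Fin m → ℕ) _ => Fin.cons x.1.1 x.2)
    · rintro ⟨⟨a, b⟩, l'⟩ hx
      simp only [Finset.mem_sigma, Finset.HasAntidiagonal.mem_antidiagonal,
        Finset.Nat.mem_antidiagonalTuple] at hx
      rw [Finset.Nat.mem_antidiagonalTuple, Fin.sum_univ_succ]
      simp only [Fin.cons_zero, Fin.cons_succ]
      rw [hx.2]
      exact hx.1
    · rintro ⟨⟨a₁, b₁⟩, l₁⟩ h₁ ⟨⟨a₂, b₂⟩, l₂⟩ h₂ heq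
      have ha : a₁ = a₂ := by
        have := congrFun heq 0
        simpa using this
      have hl : l₁ = l₂ := by
        funext j
        have := congrFun heq j.succ
        simpa using this
      subst ha; subst hl
      simp only [Finset.mem_sigma, Finset.HasAntidiagonal.mem_antidiagonal] at h₁ h₂
      have hb : b₁ = b₂ := by omega
      subst hb; rfl
    · intro l hl
      refine ⟨⟨⟨l 0, ∑ j : Fin m, l j.succ⟩, Fin.tail l⟩, ?_, ?_⟩
      · simp only [Finset.mem_sigma, Finset.HasAntidiagonal.mem_antidiagonal,
          Finset.Nat.mem_antidiagonalTuple]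
        constructor
        · rw [Finset.Nat.mem_antidiagonalTuple] at hl
          rw [← hl, Fin.sum_univ_succ]
        · rfl
      · exact Fin.cons_self_tail l
    · rintro ⟨⟨a, b⟩, l'⟩ hx
      rfl
  rw [← h1, Finset.sum_sigma]

theorem T_factorization : ∀ (m : ℕ) (c : Fin m → Perm (Fin n)),
    (∀ j j', j ≠ j' → Disjoint (c j).support (c j').support) →
    ∀ k : ℕ, ((T k (List.ofFn c).prod : ℕ) : ℚ) =
      ∑ l ∈ Finset.Nat.antidiagonalTuple m k,
        ((k.factorial : ℚ) / ∏ j, ((l j).factorial : ℚ)) * ∏ j, ((T (l j) (c j) : ℕ) : ℚ) := by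
  intro m
  induction m with
  | zero =>
    intro c _ k
    rw [List.ofFn_zero, List.prod_nil, T_one]
    cases k with
    | zero =>
      rw [Finset.Nat.antidiagonalTuple_zero_zero]
      simp
    | succ k =>
      rw [Finset.Nat.antidiagonalTuple_zero_succ]
      simp
  | succ m ih =>
    intro c hdisj k
    have hdisj0 : (c 0).Disjoint (List.ofFn (Fin.tail c)).prod := by
      apply Equiv.Perm.disjoint_prod_right
      intro g hg
      obtain ⟨j, rfl⟩ := List.mem_ofFn.1 hg
      rw [Perm.disjoint_iff_disjoint_support]
      exact hdisj 0 j.succ (Fin.succ_ne_zero j).symm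
    have hstep : (List.ofFn c).prod = c 0 * (List.ofFn (Fin.tail c)).prod := by
      rw [List.ofFn_succ, List.prod_cons]
      rfl
    rw [hstep, T_mul_disjoint k hdisj0]
    push_cast
    rw [sum_antidiagonalTuple_succ]
    refine Finset.sum_congr rfl fun p hp => ?_
    obtain ⟨a, b⟩ := p
    have hk : a + b = k := Finset.HasAntidiagonal.mem_antidiagonal.1 hp
    have ihb := ih (Fin.tail c) (fun j j' hjj =>
      hdisj j.succ j'.succ (fun hc => hjj (Fin.succ_injective m hc))) b
    rw [ihb, Finset.mul_sum]
    refine Finset.sum_congr rfl fun l' hl' => ?_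
    rw [Fin.prod_univ_succ (f := fun j => (((Fin.cons a l' : Fin (m+1) → ℕ) j).factorial : ℚ)),
      Fin.prod_univ_succ (f := fun j => ((T ((Fin.cons a l' : Fin (m+1) → ℕ) j) (c j) : ℕ) : ℚ))]
    simp only [Fin.cons_zero, Fin.cons_succ]
    have hfact : (k.factorial : ℚ) = (k.choose a) * a.factorial * b.factorial := by
      have h1 := Nat.choose_mul_factorial_mul_factorial (show a ≤ k by omega)
      have h2 : k - a = b := by omega
      rw [h2] at h1
      exact_mod_cast h1.symm
    have hprodne : (∏ j : Fin m, ((l' j).factorial : ℚ)) ≠ 0 :=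
      Finset.prod_ne_zero_iff.2 fun j _ =>
        Nat.cast_ne_zero.2 (Nat.factorial_ne_zero _)
    have hane : ((a.factorial : ℚ)) ≠ 0 := Nat.cast_ne_zero.2 (Nat.factorial_ne_zero _)
    rw [hfact]
    have hT : (∏ j : Fin m, ((T (l' j) (Fin.tail c j) : ℕ) : ℚ)) =
        ∏ j : Fin m, ((T (l' j) (c j.succ) : ℕ) : ℚ) := rfl
    rw [hT]
    field_simp

end final

end Dev

/-- If `σ = c_1 ⋯ c_m` is the decomposition of `σ` into cycles with pairwise
disjoint supports (`m = ℓ(σ)`, fixed points included as trivial factors), then for every `k`,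
`S(σ, k, 0) = ∑_{l_1+⋯+l_m=k} (k!/(l_1!⋯l_m!)) · S(c_1,l_1,0) ⋯ S(c_m,l_m,0)`. -/
theorem S_factorization (n m : ℕ) (hn : 1 ≤ n) (σ : Equiv.Perm (Fin n))
    (c : Fin m → Equiv.Perm (Fin n))
    (hm : m = cycCount σ)
    (hcyc : ∀ j, (c j).IsCycle ∨ c j = 1)
    (hdisj : ∀ j j', j ≠ j' → Disjoint (c j).support (c j').support)
    (hprod : (List.ofFn c).prod = σ)
    (k : ℕ) :
    (S n σ k 0 : ℚ) =
      ∑ l ∈ Finset.Nat.antidiagonalTuple m k,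
        ((k.factorial : ℚ) / ∏ j, ((l j).factorial : ℚ)) *
          ∏ j, (S n (c j) (l j) 0 : ℚ) := by
  subst hprod
  simp only [S_eq_T]
  exact T_factorization m c (fun j j' h => hdisj j j' h) k
end
end

section
/- Fix a real number t ≥ 0. For n ≥ 1 define m_n = e^{−nt/2} · (1/n) · ∑_{k=0}^{n−1} binom(n, k+1) · (−nt)^k / k!. In the ring ℝ⟦X⟧ of formal power series over ℝ, let S_t = ∑_{n≥1} m_n X^n and let χ_t = e^{t/2} · X · (1+X)^{−1} · exp(tX), where (1+X)^{−1} = ∑_{j≥0} (−1)^j X^j and exp(tX) = ∑_{j≥0} t^j X^j / j!. Then χ_t has zero constant term and substituting χ_t into S_t gives the identity series: S_t(χ_t) = X. In other words, χ_t is the compositional inverse of the moment generating series S_t. -/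
noncomputable section

/-- The `n`-th moment `m_n = e^{−nt/2} · (1/n) · ∑_{k=0}^{n−1} binom(n,k+1) (−nt)^k / k!`
(with `m_0 = 0`). -/
def momentCoeff (t : ℝ) (n : ℕ) : ℝ :=
  if n = 0 then 0
  else Real.exp (-((n : ℝ) * t) / 2) * (1 / (n : ℝ)) *
    ∑ k ∈ Finset.range n, (n.choose (k + 1) : ℝ) * (-((n : ℝ) * t)) ^ k / (k.factorial : ℝ)

/-- The moment generating series `S_t = ∑_{n≥1} m_n X^n ∈ ℝ⟦X⟧`. -/
def momentSeries (t : ℝ) : PowerSeries ℝ :=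
  PowerSeries.mk (momentCoeff t)

/-- `χ_t = e^{t/2} · X · (1+X)^{−1} · exp(tX) ∈ ℝ⟦X⟧`, with
`(1+X)^{−1} = ∑_j (−1)^j X^j` and `exp(tX) = ∑_j t^j X^j / j!`. -/
def chiSeries (t : ℝ) : PowerSeries ℝ :=
  PowerSeries.C (Real.exp (t / 2)) * PowerSeries.X *
    PowerSeries.mk (fun j => (-1 : ℝ) ^ j) *
    PowerSeries.mk (fun j => t ^ j / (j.factorial : ℝ))

open PowerSeries Finset

/-- `ψ_t = e^{-t/2}(1+X)e^{-tX}`, so that `χ_t · ψ_t = X`. -/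
def psiS (t : ℝ) : PowerSeries ℝ :=
  PowerSeries.C (Real.exp (-t / 2)) * (1 + PowerSeries.X) *
    PowerSeries.mk (fun j => (-t) ^ j / (j.factorial : ℝ))

/-- `θ_t = e^{t/2}(1+X)^{-1}e^{tX}`, the multiplicative inverse of `ψ_t`. -/
def thetaS (t : ℝ) : PowerSeries ℝ :=
  PowerSeries.C (Real.exp (t / 2)) * PowerSeries.mk (fun j => (-1 : ℝ) ^ j) *
    PowerSeries.mk (fun j => t ^ j / (j.factorial : ℝ))

lemma mk_eq_rescale_exp (a : ℝ) :
    PowerSeries.mk (fun j => a ^ j / (j.factorial : ℝ)) = rescale a (PowerSeries.exp ℝ) := by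
  ext n
  simp [coeff_rescale, coeff_exp, eq_ratCast]
  ring

lemma geom_mul : (1 + PowerSeries.X) * PowerSeries.mk (fun j => (-1 : ℝ) ^ j) = 1 := by
  ext n
  rw [add_mul, one_mul, map_add]
  cases n with
  | zero => simp
  | succ n => rw [coeff_succ_X_mul]; simp [pow_succ]

lemma exp_mul_exp_neg (t : ℝ) : PowerSeries.mk (fun j => (-t) ^ j / (j.factorial : ℝ)) *
    PowerSeries.mk (fun j => t ^ j / (j.factorial : ℝ)) = 1 := by
  rw [mk_eq_rescale_exp, mk_eq_rescale_exp, PowerSeries.exp_mul_exp_eq_exp_add,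
    neg_add_cancel, rescale_zero]
  simp

lemma psi_mul_theta (t : ℝ) : psiS t * thetaS t = 1 := by
  have h1 : (PowerSeries.C (Real.exp (-t / 2))) * (PowerSeries.C (Real.exp (t / 2))) = 1 := by
    rw [← map_mul, ← Real.exp_add, show (-t/2 + t/2 : ℝ) = 0 by ring, Real.exp_zero, map_one]
  have h := exp_mul_exp_neg t
  calc psiS t * thetaS t
      = ((PowerSeries.C (Real.exp (-t / 2))) * (PowerSeries.C (Real.exp (t / 2)))) *
        ((1 + PowerSeries.X) * PowerSeries.mk (fun j => (-1 : ℝ) ^ j)) *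
        (PowerSeries.mk (fun j => (-t) ^ j / (j.factorial : ℝ)) *
         PowerSeries.mk (fun j => t ^ j / (j.factorial : ℝ))) := by
        unfold psiS thetaS; ring
    _ = 1 := by rw [h1, geom_mul, h]; ring

lemma chi_eq (t : ℝ) : chiSeries t = PowerSeries.X * thetaS t := by
  unfold chiSeries thetaS; ring

lemma expS_pow (a : ℝ) (n : ℕ) :
    (PowerSeries.mk (fun j => a ^ j / (j.factorial : ℝ))) ^ n =
      PowerSeries.mk (fun j => ((n : ℝ) * a) ^ j / (j.factorial : ℝ)) := by
  simp only [mk_eq_rescale_exp]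
  induction n with
  | zero => simp [rescale_zero]
  | succ n ih =>
    rw [pow_succ, ih, PowerSeries.exp_mul_exp_eq_exp_add]
    congr 1
    push_cast
    ring

lemma coeff_one_add_X_pow (n k : ℕ) :
    PowerSeries.coeff k ((1 + PowerSeries.X) ^ n) = (n.choose k : ℝ) := by
  have : ((1 + PowerSeries.X : PowerSeries ℝ)) =
      ((1 + Polynomial.X : Polynomial ℝ) : PowerSeries ℝ) := by simp
  rw [this, ← Polynomial.coe_pow, Polynomial.coeff_coe, Polynomial.coeff_one_add_X_pow]

lemma psi_pow (t : ℝ) (n : ℕ) : psiS t ^ n =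
    PowerSeries.C (Real.exp (-((n : ℝ) * t) / 2)) * (1 + PowerSeries.X) ^ n *
      PowerSeries.mk (fun j => (-((n : ℝ) * t)) ^ j / (j.factorial : ℝ)) := by
  have h1 : Real.exp (-t / 2) ^ n = Real.exp (-((n : ℝ) * t) / 2) := by
    rw [← Real.exp_nat_mul]; ring_nf
  have h2 := expS_pow (-t) n
  have h3 : (n : ℝ) * -t = -((n : ℝ) * t) := by ring
  unfold psiS
  rw [mul_pow, mul_pow, ← map_pow, h1, h2, h3]

lemma moment_coeff_psi (t : ℝ) (i : ℕ) :
    PowerSeries.coeff i (psiS t ^ (i + 1)) = ((i + 1 : ℕ) : ℝ) * momentCoeff t (i + 1) := by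
  rw [psi_pow, mul_assoc, PowerSeries.coeff_C_mul, PowerSeries.coeff_mul,
    Finset.Nat.sum_antidiagonal_eq_sum_range_succ_mk]
  simp only [coeff_one_add_X_pow, PowerSeries.coeff_mk]
  rw [momentCoeff]
  simp only [Nat.add_eq_zero, one_ne_zero, and_false, if_false]
  have hsum : ∑ k ∈ Finset.range (i + 1),
      (((i+1).choose k : ℝ)) * ((-(((i+1 : ℕ) : ℝ) * t)) ^ (i - k) / ((i - k).factorial : ℝ))
      = ∑ k ∈ Finset.range (i + 1),
        (((i+1).choose (k+1) : ℝ)) * (-(((i+1 : ℕ) : ℝ) * t)) ^ k / ((k).factorial : ℝ) := by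
    rw [← Finset.sum_range_reflect]
    refine Finset.sum_congr rfl fun j hj => ?_
    have hji : j ≤ i := Nat.lt_succ_iff.mp (Finset.mem_range.mp hj)
    have h1 : i + 1 - 1 - j = i - j := by omega
    have h2 : i - (i - j) = j := by omega
    have h3 : i - j = (i + 1) - (j + 1) := by omega
    rw [h1, h2, h3, Nat.choose_symm (by omega), mul_div_assoc]
  rw [hsum]
  have hne : (((i+1 : ℕ)) : ℝ) ≠ 0 := Nat.cast_ne_zero.mpr (Nat.succ_ne_zero i)
  field_simp

lemma key_identity (ψ θ : PowerSeries ℝ) (h : ψ * θ = 1) (r c : ℕ) :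
    PowerSeries.coeff (c + 1)
      ((PowerSeries.X * d⁄dX ℝ ((PowerSeries.X * θ) ^ (r + 1))) * ψ ^ (c + 1)) =
      if r = c then ((c + 1 : ℕ) : ℝ) else 0 := by
  set D := d⁄dX ℝ with hDdef
  have hpow : ∀ m : ℕ, ψ ^ m * θ ^ m = 1 := fun m => by rw [← mul_pow, h, one_pow]
  have hDθ : ψ * D θ = -(θ * D ψ) := by
    have h0 : D (ψ * θ) = 0 := by rw [h, hDdef]; exact Derivation.map_one_eq_zero _
    rw [Derivation.leibniz] at h0
    simp only [smul_eq_mul] at h0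
    exact eq_neg_of_add_eq_zero_left h0
  have hD : PowerSeries.X * D ((PowerSeries.X * θ) ^ (r + 1)) =
      ((r + 1 : ℕ) : PowerSeries ℝ) *
        (PowerSeries.X ^ (r + 1) * (θ ^ (r + 1) + PowerSeries.X * (θ ^ r * D θ))) := by
    rw [hDdef, Derivation.leibniz_pow, Derivation.leibniz, derivative_X]
    simp only [Nat.succ_sub_one, smul_eq_mul, nsmul_eq_mul, ← hDdef]
    ring
  rw [hD]
  rw [show ((r + 1 : ℕ) : PowerSeries ℝ) *
        (PowerSeries.X ^ (r + 1) * (θ ^ (r + 1) + PowerSeries.X * (θ ^ r * D θ))) * ψ ^ (c+1)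
      = ((r + 1 : ℕ) : PowerSeries ℝ) *
        (PowerSeries.X ^ (r + 1) * ((θ ^ (r + 1) + PowerSeries.X * (θ ^ r * D θ)) * ψ ^ (c+1)))
      from by ring]
  rw [← map_natCast (PowerSeries.C) (r + 1), PowerSeries.coeff_C_mul,
    PowerSeries.coeff_X_pow_mul']
  by_cases hrc : r + 1 ≤ c + 1
  · rw [if_pos hrc]
    rcases Nat.lt_or_ge r c with hlt | hge
    · -- r < c
      obtain ⟨e, he⟩ : ∃ e, c = r + 1 + e := ⟨c - r - 1, by omega⟩
      subst he
      have hsub : r + 1 + e + 1 - (r + 1) = e + 1 := by omega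
      rw [hsub]
      have hform : (θ ^ (r + 1) + PowerSeries.X * (θ ^ r * D θ)) * ψ ^ (r + 1 + e + 1)
          = ψ ^ (e + 1) + PowerSeries.X * -(ψ ^ e * D ψ) := by
        have expand : (θ ^ (r + 1) + PowerSeries.X * (θ ^ r * D θ)) * ψ ^ (r + 1 + e + 1)
            = (ψ ^ (r+1) * θ ^ (r+1)) * ψ ^ (e + 1)
              + PowerSeries.X * ((ψ ^ r * θ ^ r) * ((ψ * D θ) * ψ ^ (e + 1))) := by ring
        rw [expand, hpow (r+1), hpow r, hDθ, one_mul, one_mul]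
        congr 1
        rw [show -(θ * D ψ) * ψ ^ (e+1) = -((ψ * θ) * (ψ ^ e * D ψ)) from by ring, h, one_mul]
      rw [hform, map_add]
      have h1 : PowerSeries.coeff (e + 1) (PowerSeries.X * -(ψ ^ e * D ψ))
          = -(PowerSeries.coeff e (ψ ^ e * D ψ)) := by
        rw [PowerSeries.coeff_succ_X_mul, map_neg]
      have h2 : PowerSeries.coeff e (ψ ^ e * D ψ) = PowerSeries.coeff (e+1) (ψ ^ (e+1)) := by
        have hd : D (ψ ^ (e + 1)) = ((e+1 : ℕ) : PowerSeries ℝ) * (ψ ^ e * D ψ) := by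
          rw [hDdef, Derivation.leibniz_pow]
          simp only [Nat.succ_sub_one, smul_eq_mul, nsmul_eq_mul, ← hDdef]
        have hcd := PowerSeries.coeff_derivative (ψ ^ (e+1)) e
        rw [← hDdef, hd, ← map_natCast (PowerSeries.C) (e + 1), PowerSeries.coeff_C_mul] at hcd
        have hne : ((e + 1 : ℕ) : ℝ) ≠ 0 := Nat.cast_ne_zero.mpr (Nat.succ_ne_zero e)
        refine mul_left_cancel₀ hne ?_
        push_cast at hcd ⊢
        linarith
      rw [h1, h2, if_neg (by omega)]
      ring
    · -- r = c
      have hrc' : r = c := by omega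
      subst hrc'
      rw [Nat.sub_self, if_pos rfl]
      have hform : (θ ^ (r + 1) + PowerSeries.X * (θ ^ r * D θ)) * ψ ^ (r + 1)
          = 1 + PowerSeries.X * (θ ^ r * D θ * ψ ^ (r+1)) := by
        rw [show (θ ^ (r + 1) + PowerSeries.X * (θ ^ r * D θ)) * ψ ^ (r + 1)
            = (ψ ^ (r+1) * θ ^ (r+1)) + PowerSeries.X * (θ ^ r * D θ * ψ ^ (r+1)) from by ring,
          hpow (r+1)]
      rw [hform, map_add]
      simp [PowerSeries.coeff_zero_eq_constantCoeff]
  · rw [if_neg hrc, if_neg (by omega), mul_zero]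

/-- The coefficient-sum form of the key identity. -/
lemma claim1 (ψ θ : PowerSeries ℝ) (h : ψ * θ = 1) (r c : ℕ) :
    ∑ i ∈ Finset.range (c + 1),
      (((i + 1 : ℕ)) : ℝ) * PowerSeries.coeff (i + 1) ((PowerSeries.X * θ) ^ (r + 1)) *
        PowerSeries.coeff (c - i) (ψ ^ (c + 1)) =
      if r = c then ((c + 1 : ℕ) : ℝ) else 0 := by
  rw [← key_identity ψ θ h r c, PowerSeries.coeff_mul,
    Finset.Nat.sum_antidiagonal_eq_sum_range_succ_mk]
  conv_rhs => rw [Finset.sum_range_succ' _ (c + 1)]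
  have h0 : PowerSeries.coeff 0
      (PowerSeries.X * d⁄dX ℝ ((PowerSeries.X * θ) ^ (r + 1))) = 0 := by
    simp [PowerSeries.coeff_zero_eq_constantCoeff]
  rw [h0, zero_mul, add_zero]
  refine Finset.sum_congr rfl fun i hi => ?_
  rw [PowerSeries.coeff_succ_X_mul, PowerSeries.coeff_derivative]
  have hci : c + 1 - (i + 1) = c - i := by omega
  rw [hci]
  push_cast
  ring

lemma main_sum (t : ℝ) (j : ℕ) (hj : 0 < j) :
    ∑ i ∈ Finset.range j, momentCoeff t (i + 1) *
        PowerSeries.coeff j ((chiSeries t) ^ (i + 1)) =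
      if j = 1 then 1 else 0 := by
  have hψθ := psi_mul_theta t
  set ψ := psiS t
  set θ := thetaS t
  set B : Matrix (Fin j) (Fin j) ℝ :=
    fun r i => PowerSeries.coeff ((i : ℕ) + 1) ((PowerSeries.X * θ) ^ ((r : ℕ) + 1)) with hB
  set M : Matrix (Fin j) (Fin j) ℝ :=
    fun i c => if (c : ℕ) < (i : ℕ) then 0
      else (((i : ℕ) + 1 : ℝ)) / (((c : ℕ) + 1 : ℝ)) *
        PowerSeries.coeff ((c : ℕ) - (i : ℕ)) (ψ ^ ((c : ℕ) + 1)) with hM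
  have hBM : B * M = 1 := by
    ext r c
    rw [Matrix.mul_apply, Matrix.one_apply]
    have e1 : ∑ i : Fin j, B r i * M i c =
        ∑ i ∈ Finset.range j, (if (c : ℕ) < i then (0:ℝ) else
          PowerSeries.coeff (i + 1) ((PowerSeries.X * θ) ^ ((r : ℕ) + 1)) *
            (((i:ℝ) + 1) / (((c : ℕ) + 1 : ℝ)) *
              PowerSeries.coeff ((c : ℕ) - i) (ψ ^ ((c : ℕ) + 1)))) := by
      rw [← Fin.sum_univ_eq_sum_range (fun i => (if (c : ℕ) < i then (0:ℝ) else
          PowerSeries.coeff (i + 1) ((PowerSeries.X * θ) ^ ((r : ℕ) + 1)) *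
            (((i:ℝ) + 1) / (((c : ℕ) + 1 : ℝ)) *
              PowerSeries.coeff ((c : ℕ) - i) (ψ ^ ((c : ℕ) + 1))))) j]
      refine Finset.sum_congr rfl fun i _ => ?_
      rw [hB, hM]
      dsimp only
      split_ifs with hic
      · rw [mul_zero]
      · rfl
    rw [e1]
    have hsub : Finset.range ((c : ℕ) + 1) ⊆ Finset.range j := by
      intro x hx
      rw [Finset.mem_range] at *
      omega
    rw [← Finset.sum_subset hsub (fun x _ hx => by
      rw [Finset.mem_range] at hx
      rw [if_pos (by omega)])]
    have hin : ∀ x ∈ Finset.range ((c : ℕ) + 1),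
        (if (c : ℕ) < x then (0:ℝ) else
          PowerSeries.coeff (x + 1) ((PowerSeries.X * θ) ^ ((r : ℕ) + 1)) *
            (((x:ℝ) + 1) / (((c : ℕ) + 1 : ℝ)) *
              PowerSeries.coeff ((c : ℕ) - x) (ψ ^ ((c : ℕ) + 1)))) =
        (1 / (((c : ℕ) + 1 : ℝ))) *
          (((x + 1 : ℕ) : ℝ) * PowerSeries.coeff (x + 1) ((PowerSeries.X * θ) ^ ((r : ℕ) + 1)) *
            PowerSeries.coeff ((c : ℕ) - x) (ψ ^ ((c : ℕ) + 1))) := by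
      intro x hx
      rw [Finset.mem_range] at hx
      rw [if_neg (by omega)]
      push_cast
      ring
    rw [Finset.sum_congr rfl hin, ← Finset.mul_sum, claim1 ψ θ hψθ (r : ℕ) (c : ℕ)]
    have hcne : (((c : ℕ) : ℝ) + 1) ≠ 0 := by positivity
    split_ifs with h1 h2 h3
    · push_cast
      field_simp
    · exact absurd (Fin.ext h1) h2
    · exact absurd (Fin.val_eq_of_eq h3) h1
    · rw [mul_zero]
  have hMB : M * B = 1 := mul_eq_one_comm.mp hBM
  have hentry := congrFun (congrFun hMB ⟨0, hj⟩) ⟨j - 1, by omega⟩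
  rw [Matrix.mul_apply, Matrix.one_apply] at hentry
  have e2 : ∑ i : Fin j, M ⟨0, hj⟩ i * B i ⟨j - 1, by omega⟩ =
      ∑ i ∈ Finset.range j, momentCoeff t (i + 1) *
        PowerSeries.coeff j ((chiSeries t) ^ (i + 1)) := by
    rw [← Fin.sum_univ_eq_sum_range (fun i => momentCoeff t (i + 1) *
        PowerSeries.coeff j ((chiSeries t) ^ (i + 1))) j]
    refine Finset.sum_congr rfl fun i _ => ?_
    rw [hM, hB]
    dsimp only
    rw [if_neg (by omega), Nat.sub_zero, moment_coeff_psi]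
    have hje : (j : ℕ) - 1 + 1 = j := by omega
    rw [hje, ← chi_eq]
    have hne : (((i : ℕ) : ℝ) + 1) ≠ 0 := by positivity
    push_cast
    field_simp
    ring
  rw [e2] at hentry
  rw [hentry]
  split_ifs with h1 h2 h3
  · rfl
  · exfalso
    have h0 := Fin.mk_eq_mk.mp h1
    omega
  · exact absurd (Fin.mk_eq_mk.mpr (by omega)) h1
  · rfl

/-- `χ_t` has zero constant term, and substituting `χ_t` into `S_t` yields
the identity series `X`: coefficient-wise, for every `j`,
`∑_{i=0}^{j} (coeff_i S_t) · coeff_j (χ_t^i) = coeff_j X` (since `χ_t` has zero constant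
term, `coeff_j (χ_t^i) = 0` for `i > j`, so this finite sum is the `j`-th coefficient of the
composition `S_t(χ_t)`).  Thus `χ_t` is the compositional inverse of `S_t`. -/
theorem chi_comp_inverse (t : ℝ) (ht : 0 ≤ t) :
    PowerSeries.constantCoeff (chiSeries t) = 0 ∧
    ∀ j : ℕ,
      (∑ i ∈ Finset.range (j + 1),
          PowerSeries.coeff i (momentSeries t) * PowerSeries.coeff j (chiSeries t ^ i))
        = PowerSeries.coeff j (PowerSeries.X : PowerSeries ℝ) := by
  constructor
  · simp [chiSeries]
  · intro j
    rcases Nat.eq_zero_or_pos j with hj | hj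
    · subst hj
      simp [momentSeries, momentCoeff]
    · rw [Finset.sum_range_succ']
      have hm0 : PowerSeries.coeff 0 (momentSeries t) = 0 := by
        simp [momentSeries, momentCoeff]
      rw [hm0, zero_mul, add_zero]
      have hterm : ∀ i ∈ Finset.range j,
          PowerSeries.coeff (i + 1) (momentSeries t) *
            PowerSeries.coeff j (chiSeries t ^ (i + 1)) =
          momentCoeff t (i + 1) * PowerSeries.coeff j (chiSeries t ^ (i + 1)) := by
        intro i _
        rw [momentSeries, PowerSeries.coeff_mk]
      rw [Finset.sum_congr rfl hterm, main_sum t j hj, PowerSeries.coeff_X]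
end
end
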